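/- arXiv:2409.12557 — 3 statements merged into one kernel-verified Lean document; each statement's English description precedes it below -/
import Mathlib

section
/- There exists a function ψ: ℕ → [0, 1/2) such that ∑_{q=1}^∞ ψ(q) = ∞ and yet the set W(ψ, ℕ) has Fourier dimension 0; that is, for every Borel probability measure μ on ℝ with μ(W(ψ, ℕ)) = 1 and every s > 0, there is no constant C > 0 such that |μ̂(ξ)| ≤ C(1 + |ξ|)^{−s/2} for all ξ ∈ ℝ. -/
open MeasureTheory

/-- Distance from a real number to the nearest integer. -/
noncomputable def nint (x : ℝ) : ℝ := |x - round x|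

/-- Fourier transform of a measure on `ℝ`: `μ̂(ξ) = ∫ e^{-2πiξx} dμ(x)`. -/
noncomputable def ft1 (μ : Measure ℝ) (ξ : ℝ) : ℂ :=
  ∫ x, Complex.exp (((-(2 * Real.pi * (ξ * x)) : ℝ) : ℂ) * Complex.I) ∂μ

/-- The `ψ`-well approximable set `W(ψ, Q)`. -/
def W (ψ : ℕ → ℝ) (Q : Set ℕ) : Set ℝ :=
  {x | x ∈ Set.Icc (0 : ℝ) 1 ∧ {q : ℕ | q ∈ Q ∧ nint (q * x) < ψ q}.Infinite}

open Filter Nat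

set_option maxHeartbeats 1000000

lemma nint_nonneg (x : ℝ) : 0 ≤ nint x := abs_nonneg _

lemma nint_le_abs_sub_int (x : ℝ) (z : ℤ) : nint x ≤ |x - z| := by
  rcases eq_or_ne z (round x) with rfl | hz
  · exact le_of_eq rfl
  · have h1 : (1 : ℝ) ≤ |(round x : ℝ) - z| := by
      have : round x - z ≠ 0 := sub_ne_zero.mpr (by exact_mod_cast (Ne.symm hz))
      have : (1:ℤ) ≤ |round x - z| := Int.one_le_abs this
      calc (1:ℝ) ≤ ((|round x - z| : ℤ) : ℝ) := by exact_mod_cast this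
        _ = |(round x : ℝ) - z| := by rw [Int.cast_abs]; push_cast; ring_nf
    have h2 : |x - round x| ≤ 1/2 := abs_sub_round x
    have h3 : |(round x : ℝ) - z| ≤ |x - round x| + |x - z| := by
      have := abs_sub_abs_le_abs_sub ((round x : ℝ) - z) 0
      calc |(round x:ℝ) - z| = |((round x:ℝ) - x) + (x - z)| := by ring_nf
        _ ≤ |(round x:ℝ) - x| + |x - z| := abs_add_le _ _
        _ = |x - round x| + |x - z| := by rw [abs_sub_comm]
    have : 1/2 ≤ |x - z| := by linarith
    calc nint x ≤ 1/2 := h2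
      _ ≤ |x - z| := this

lemma measurable_nint : Measurable nint := by
  have h : Measurable fun x : ℝ => ((round x : ℤ) : ℝ) := by
    have : Measurable fun x : ℝ => (⌊x + 1/2⌋ : ℤ) :=
      Int.measurable_floor.comp (measurable_id.add_const _)
    have h2 : (fun x : ℝ => ((round x : ℤ) : ℝ)) = fun x => ((⌊x + 1/2⌋ : ℤ) : ℝ) := by
      funext x; rw [round_eq]
    rw [h2]
    exact Measurable.comp measurable_from_top this
  exact (measurable_id.sub h).abs

noncomputable def Hsum (k : ℕ) : ℝ := ∑ i ∈ Finset.range k, 1/(i+1)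

lemma Hsum_mono : Monotone Hsum := by
  intro a b hab
  exact Finset.sum_le_sum_of_subset_of_nonneg (Finset.range_subset_range.mpr hab)
    (fun i _ _ => by positivity)

lemma exists_harmonic_ge (b : ℝ) : ∃ k, b ≤ Hsum k := by
  have := Real.tendsto_sum_range_one_div_nat_succ_atTop
  have h := (this.eventually_ge_atTop b).exists
  obtain ⟨k, hk⟩ := h
  exact ⟨k, by simpa [Hsum] using hk⟩

noncomputable def Kfun : ℕ → ℕ
  | 0 => max (exists_harmonic_ge 8).choose 2
  | n+1 => max (exists_harmonic_ge ((n+2) * 2^(n+4))).choose (Kfun n + 2)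

lemma Kfun_harmonic (n : ℕ) : ((n:ℝ)+1) * 2^(n+3) ≤ Hsum (Kfun n) := by
  cases n with
  | zero =>
      have h := (exists_harmonic_ge 8).choose_spec
      have : Hsum (exists_harmonic_ge 8).choose ≤ Hsum (Kfun 0) :=
        Hsum_mono (by simp [Kfun])
      norm_num
      linarith
  | succ n =>
      have h := (exists_harmonic_ge ((n+2) * 2^(n+4))).choose_spec
      have h2 : Hsum (exists_harmonic_ge ((n+2) * 2^(n+4))).choose ≤ Hsum (Kfun (n+1)) :=
        Hsum_mono (by simp [Kfun])
      have : ((n:ℝ)+1+1) * 2^(n+1+3) = ((n:ℝ)+2) * 2^(n+4) := by ring_nf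
      push_cast at h ⊢
      linarith

lemma Kfun_succ (n : ℕ) : Kfun n + 2 ≤ Kfun (n+1) := by
  simp [Kfun]

lemma Kfun_lb (n : ℕ) : 2*n + 2 ≤ Kfun n := by
  induction n with
  | zero => simp [Kfun]
  | succ n ih =>
      have := Kfun_succ n
      omega

lemma Kfun_strictMono : StrictMono Kfun := by
  have h : ∀ n, Kfun n < Kfun (n+1) := fun n => by have := Kfun_succ n; omega
  exact strictMono_nat_of_lt_succ h

noncomputable def cseq (n : ℕ) : ℝ := (1/8) * (1/2)^n

lemma cseq_pos (n : ℕ) : 0 < cseq n := by unfold cseq; positivity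

noncomputable def psi (q : ℕ) : ℝ :=
  ∑ n ∈ Finset.range (q+1), ∑ m ∈ Finset.Icc 1 (Kfun n),
    if m * q = (Kfun n)! then cseq n / m else 0

lemma psi_nonneg (q : ℕ) : 0 ≤ psi q := by
  apply Finset.sum_nonneg; intro n _
  apply Finset.sum_nonneg; intro m _
  split
  · exact div_nonneg (cseq_pos n).le (by positivity)
  · exact le_refl 0

lemma block_bounds {n m q : ℕ} (hm1 : 1 ≤ m) (hmK : m ≤ Kfun n) (h : m * q = (Kfun n)!) :
    (Kfun n - 1)! ≤ q ∧ q ≤ (Kfun n)! := by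
  have hK : 2 ≤ Kfun n := le_trans (by omega) (Kfun_lb n)
  constructor
  · have hfac : (Kfun n)! = Kfun n * (Kfun n - 1)! := by
      nth_rewrite 1 [show Kfun n = (Kfun n - 1) + 1 by omega]
      rw [Nat.factorial_succ]
      congr 1
      omega
    have h1 : Kfun n * (Kfun n - 1)! = m * q := by rw [h, hfac]
    have h2 : m * q ≤ Kfun n * q := Nat.mul_le_mul_right q hmK
    have h3 : Kfun n * (Kfun n - 1)! ≤ Kfun n * q := by omega
    exact Nat.le_of_mul_le_mul_left h3 (by omega)
  · calc q ≤ m * q := Nat.le_mul_of_pos_left q (by omega)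
      _ = (Kfun n)! := h

lemma block_unique_n {n n' m m' q : ℕ} (hm1 : 1 ≤ m) (hmK : m ≤ Kfun n)
    (h : m * q = (Kfun n)!) (hm1' : 1 ≤ m') (hmK' : m' ≤ Kfun n')
    (h' : m' * q = (Kfun n')!) : n = n' := by
  by_contra hne
  -- wlog n < n'
  wlog hlt : n < n' generalizing n n' m m'
  · exact this hm1' hmK' h' hm1 hmK h (Ne.symm hne) (by omega)
  have hq_le : q ≤ (Kfun n)! := (block_bounds hm1 hmK h).2
  have hq_ge : (Kfun n' - 1)! ≤ q := (block_bounds hm1' hmK' h').1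
  have hKmono : Kfun n + 2 ≤ Kfun n' := by
    calc Kfun n + 2 ≤ Kfun (n+1) := Kfun_succ n
      _ ≤ Kfun n' := Kfun_strictMono.monotone hlt
  have hfac : (Kfun n + 1)! ≤ (Kfun n' - 1)! := Nat.factorial_le (by omega)
  have h2 : (Kfun n + 1)! = (Kfun n + 1) * (Kfun n)! := Nat.factorial_succ _
  have hKpos : 1 ≤ (Kfun n)! := Nat.one_le_iff_ne_zero.mpr (Nat.factorial_ne_zero _)
  have : 2 * (Kfun n)! ≤ (Kfun n + 1) * (Kfun n)! := by
    apply Nat.mul_le_mul_right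
    have := Kfun_lb n; omega
  omega

lemma block_n_le_q {n m q : ℕ} (hm1 : 1 ≤ m) (hmK : m ≤ Kfun n) (h : m * q = (Kfun n)!) :
    n ≤ q := by
  have h1 : (Kfun n - 1)! ≤ q := (block_bounds hm1 hmK h).1
  have h2 : 2*n + 2 ≤ Kfun n := Kfun_lb n
  have h3 : (2*n+1) ≤ (2*n+1)! := Nat.self_le_factorial _
  have h4 : (2*n+1)! ≤ (Kfun n - 1)! := Nat.factorial_le (by omega)
  omega

lemma psi_spec (q : ℕ) : psi q = 0 ∨ ∃ n m, 1 ≤ m ∧ m ≤ Kfun n ∧ m * q = (Kfun n)! ∧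
    psi q = cseq n / m := by
  by_cases hP : ∃ n m, 1 ≤ m ∧ m ≤ Kfun n ∧ m * q = (Kfun n)!
  · obtain ⟨n, m, hm1, hmK, hmq⟩ := hP
    right
    refine ⟨n, m, hm1, hmK, hmq, ?_⟩
    have hq0 : 0 < q := by
      rcases Nat.eq_zero_or_pos q with h0 | h
      · exfalso; rw [h0, mul_zero] at hmq
        exact (Nat.factorial_ne_zero (Kfun n)) hmq.symm
      · exact h
    have hn_mem : n ∈ Finset.range (q+1) := by
      simp [Nat.lt_succ_iff]
      exact block_n_le_q hm1 hmK hmq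
    unfold psi
    rw [Finset.sum_eq_single_of_mem n hn_mem]
    · rw [Finset.sum_eq_single_of_mem m (Finset.mem_Icc.mpr ⟨hm1, hmK⟩)]
      · rw [if_pos hmq]
      · intro m' hm' hne
        rw [if_neg]
        intro hc
        exact hne (Nat.eq_of_mul_eq_mul_right hq0 (hc.trans hmq.symm))
    · intro n' hn' hne
      apply Finset.sum_eq_zero
      intro m' hm'
      rw [if_neg]
      intro hc
      simp only [Finset.mem_Icc] at hm'
      exact hne (block_unique_n hm'.1 hm'.2 hc hm1 hmK hmq)
  · left
    apply Finset.sum_eq_zero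
    intro n _
    apply Finset.sum_eq_zero
    intro m hm
    rw [if_neg]
    intro hc
    simp only [Finset.mem_Icc] at hm
    exact hP ⟨n, m, hm.1, hm.2, hc⟩

lemma psi_block_ge {n m q : ℕ} (hm1 : 1 ≤ m) (hmK : m ≤ Kfun n) (hq : m * q = (Kfun n)!) :
    cseq n / m ≤ psi q := by
  have hnq : n ≤ q := block_n_le_q hm1 hmK hq
  have hterm_nonneg : ∀ n' ∈ Finset.range (q+1), 0 ≤ ∑ m' ∈ Finset.Icc 1 (Kfun n'),
      (if m' * q = (Kfun n')! then cseq n' / m' else 0) := by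
    intro n' _
    apply Finset.sum_nonneg
    intro m' _
    split
    · exact div_nonneg (cseq_pos n').le (by positivity)
    · exact le_refl 0
  calc cseq n / m = (if m * q = (Kfun n)! then cseq n / m else 0) := by rw [if_pos hq]
    _ ≤ ∑ m' ∈ Finset.Icc 1 (Kfun n), (if m' * q = (Kfun n)! then cseq n / m' else 0) := by
        apply Finset.single_le_sum (f := fun m' => if m' * q = (Kfun n)! then cseq n / m' else 0)
        · intro m' _
          split
          · exact div_nonneg (cseq_pos n).le (by positivity)
          · exact le_refl 0
        · exact Finset.mem_Icc.mpr ⟨hm1, hmK⟩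
    _ ≤ psi q := by
        unfold psi
        apply Finset.single_le_sum (f := fun n' => ∑ m' ∈ Finset.Icc 1 (Kfun n'),
          (if m' * q = (Kfun n')! then cseq n' / m' else 0)) hterm_nonneg
        simp [Nat.lt_succ_iff]
        exact hnq

lemma sum_Icc_inv (K : ℕ) : ∑ m ∈ Finset.Icc 1 K, (1:ℝ)/m = Hsum K := by
  induction K with
  | zero => simp [Hsum]
  | succ K ih =>
      rw [Finset.sum_Icc_succ_top (by omega), ih]
      unfold Hsum
      rw [Finset.sum_range_succ]
      push_cast
      ring

lemma cseq_mul : ∀ n : ℕ, cseq n * 2^(n+3) = 1 := by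
  intro n
  unfold cseq
  rw [pow_add]
  have : (1/2:ℝ)^n * 2^n = 1 := by
    rw [one_div, inv_pow, inv_mul_cancel₀ (by positivity)]
  calc (1/8) * (1/2:ℝ)^n * (2^n * 2^3) = ((1/2:ℝ)^n * 2^n) * ((1/8) * 2^3) := by ring
    _ = 1 := by rw [this]; norm_num

lemma sum_psi_ge (n : ℕ) : ((n:ℝ)+1) ≤ ∑ q ∈ Finset.range ((Kfun n)! + 1), psi q := by
  set K := Kfun n with hK
  set D := K ! with hD
  have hdvd : ∀ m ∈ Finset.Icc 1 K, m * (D / m) = D := by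
    intro m hm
    simp only [Finset.mem_Icc] at hm
    exact Nat.mul_div_cancel' (Nat.dvd_factorial (by omega) hm.2)
  have hinj : ∀ m ∈ Finset.Icc 1 K, ∀ m' ∈ Finset.Icc 1 K, D / m = D / m' → m = m' := by
    intro m hm m' hm' heq
    have h1 := hdvd m hm
    have h2 := hdvd m' hm'
    rw [heq] at h1
    have hDpos : 0 < D := Nat.factorial_pos _
    have ht : 0 < D / m' := by
      rcases Nat.eq_zero_or_pos (D / m') with h0 | h; · rw [h0, mul_zero] at h2; omega
      exact h
    exact Nat.eq_of_mul_eq_mul_right ht (h1.trans h2.symm)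
  have himg : (Finset.Icc 1 K).image (fun m => D / m) ⊆ Finset.range (D + 1) := by
    intro q hq
    simp only [Finset.mem_image] at hq
    obtain ⟨m, hm, rfl⟩ := hq
    simp only [Finset.mem_range]
    have := Nat.div_le_self D m
    omega
  calc ((n:ℝ)+1) = ((n:ℝ)+1) * (cseq n * 2^(n+3)) := by rw [cseq_mul n]; ring
    _ = cseq n * (((n:ℝ)+1) * 2^(n+3)) := by ring
    _ ≤ cseq n * Hsum K := by
        apply mul_le_mul_of_nonneg_left _ (cseq_pos n).le
        exact le_trans (le_of_eq rfl) (by push_cast; exact Kfun_harmonic n)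
    _ = ∑ m ∈ Finset.Icc 1 K, cseq n / m := by
        rw [← sum_Icc_inv, Finset.mul_sum]
        congr 1
        funext m
        ring
    _ ≤ ∑ m ∈ Finset.Icc 1 K, psi (D / m) := by
        apply Finset.sum_le_sum
        intro m hm
        simp only [Finset.mem_Icc] at hm
        exact psi_block_ge hm.1 hm.2 (hdvd m (Finset.mem_Icc.mpr hm))
    _ = ∑ q ∈ (Finset.Icc 1 K).image (fun m => D / m), psi q := by
        rw [Finset.sum_image hinj]
    _ ≤ ∑ q ∈ Finset.range (D + 1), psi q := by
        exact Finset.sum_le_sum_of_subset_of_nonneg himg (fun q _ _ => psi_nonneg q)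

noncomputable def efun (ξ x : ℝ) : ℂ :=
  Complex.exp (((-(2 * Real.pi * (ξ * x)) : ℝ) : ℂ) * Complex.I)

lemma ft1_eq (μ : Measure ℝ) (ξ : ℝ) : ft1 μ ξ = ∫ x, efun ξ x ∂μ := rfl

lemma efun_mul (a b x : ℝ) : efun a x * efun b x = efun (a+b) x := by
  unfold efun
  rw [← Complex.exp_add]
  congr 1
  push_cast
  ring

lemma efun_conj (a x : ℝ) : (starRingEnd ℂ) (efun a x) = efun (-a) x := by
  unfold efun
  rw [← Complex.exp_conj, map_mul, Complex.conj_I, Complex.conj_ofReal]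
  rw [show ((-(2 * Real.pi * (a * x)) : ℝ) : ℂ) * (-Complex.I)
      = ((-(2 * Real.pi * (-a * x)) : ℝ) : ℂ) * Complex.I by push_cast; ring]

lemma efun_abs (a x : ℝ) : ‖efun a x‖ = 1 := Complex.norm_exp_ofReal_mul_I _

lemma efun_continuous (a : ℝ) : Continuous (fun x => efun a x) := by
  unfold efun
  apply Complex.continuous_exp.comp
  apply Continuous.mul _ continuous_const
  exact Complex.continuous_ofReal.comp (by continuity)

lemma efun_integrable (a : ℝ) (μ : Measure ℝ) [IsFiniteMeasure μ] :
    Integrable (fun x => efun a x) μ := by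
  apply Integrable.mono' (integrable_const (1:ℝ)) (efun_continuous a).aestronglyMeasurable
  filter_upwards with x
  rw [efun_abs]

lemma efun_re (a x : ℝ) : (efun a x).re = Real.cos (2 * Real.pi * (a * x)) := by
  unfold efun
  rw [Complex.exp_ofReal_mul_I_re, Real.cos_neg]

lemma ft1_abs_le_one (μ : Measure ℝ) [IsProbabilityMeasure μ] (ξ : ℝ) :
    ‖ft1 μ ξ‖ ≤ 1 := by
  rw [ft1_eq]
  have := norm_integral_le_of_norm_le_const (μ := μ) (f := fun x => efun ξ x) (C := 1)
    (by filter_upwards with x; rw [efun_abs])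
  simpa using this

lemma sum_efun_normSq_ge {N : ℕ} (hN : 1 ≤ N) {c D x : ℝ} (hc : 0 < c)
    (hNc : 2 * Real.pi * N * c ≤ 1) (ht : nint (D * x) < c) :
    (N:ℝ)^2/4 ≤ Complex.normSq (∑ j ∈ Finset.range N, efun (-(j:ℝ) * D) x) := by
  have hπ := Real.pi_pos
  set z := ∑ j ∈ Finset.range N, efun (-(j:ℝ) * D) x with hz
  have hre : (N:ℝ)/2 ≤ z.re := by
    rw [hz, Complex.re_sum]
    have hterm : ∀ j ∈ Finset.range N, (1:ℝ)/2 ≤ (efun (-(j:ℝ) * D) x).re := by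
      intro j hj
      simp only [Finset.mem_range] at hj
      rw [efun_re]
      set u : ℝ := D * x - round (D * x) with hu
      have habs : |u| < c := ht
      have hrw : 2 * Real.pi * (-(j:ℝ) * D * x) =
          2 * Real.pi * (-(j:ℝ) * u) + ((-(j * round (D * x)) : ℤ) : ℝ) * (2 * Real.pi) := by
        push_cast
        rw [hu]
        ring
      rw [hrw, Real.cos_add_int_mul_two_pi]
      have hsq : (2 * Real.pi * (-(j:ℝ) * u))^2 ≤ 1 := by
        rw [sq_le_one_iff_abs_le_one]
        have h1 : |2 * Real.pi * (-(j:ℝ) * u)| = 2 * Real.pi * ((j:ℝ) * |u|) := by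
          rw [abs_mul, abs_mul, abs_mul, abs_neg, Nat.abs_cast,
            abs_of_nonneg (by norm_num : (0:ℝ) ≤ 2), abs_of_nonneg hπ.le]
        rw [h1]
        have hj' : (j:ℝ) ≤ N := by exact_mod_cast hj.le
        have : 2 * Real.pi * ((j:ℝ) * |u|) ≤ 2 * Real.pi * ((N:ℝ) * c) := by
          apply mul_le_mul_of_nonneg_left _ (by positivity)
          apply mul_le_mul hj' habs.le (abs_nonneg _) (Nat.cast_nonneg _)
        calc 2 * Real.pi * ((j:ℝ) * |u|) ≤ 2 * Real.pi * ((N:ℝ) * c) := this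
          _ = 2 * Real.pi * N * c := by ring
          _ ≤ 1 := hNc
      have key : ∀ y : ℝ, y^2 ≤ 1 → (1:ℝ)/2 ≤ Real.cos y := by
        intro y hy
        have := Real.one_sub_sq_div_two_le_cos (x := y)
        linarith
      exact key _ hsq
    calc (N:ℝ)/2 = ∑ _j ∈ Finset.range N, (1:ℝ)/2 := by
          rw [Finset.sum_const, Finset.card_range]; ring
      _ ≤ ∑ j ∈ Finset.range N, (efun (-(j:ℝ) * D) x).re := Finset.sum_le_sum hterm
  have hre_nonneg : 0 ≤ z.re := le_trans (by positivity) hre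
  calc (N:ℝ)^2/4 = ((N:ℝ)/2)^2 := by ring
    _ ≤ z.re^2 := by apply sq_le_sq' <;> nlinarith
    _ ≤ z.re * z.re + z.im * z.im := by nlinarith [sq_nonneg z.im]
    _ = Complex.normSq z := (Complex.normSq_apply z).symm

lemma rpow_neg_anti {a b e : ℝ} (ha : 0 < a) (hab : a ≤ b) (he : 0 ≤ e) :
    b ^ (-e) ≤ a ^ (-e) := by
  rw [Real.rpow_neg (le_trans ha.le hab), Real.rpow_neg ha.le]
  have h1 : 0 < a ^ e := Real.rpow_pos_of_pos ha e
  have h2 : a ^ e ≤ b ^ e := Real.rpow_le_rpow ha.le hab he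
  exact inv_anti₀ h1 h2

lemma rpow_neg_anti' {a b s : ℝ} (ha : 0 < a) (hab : a ≤ b) (hs : 0 ≤ s) :
    b ^ (-s/2) ≤ a ^ (-s/2) := by
  have he : (-s/2 : ℝ) = -(s/2) := by ring
  rw [he]
  exact rpow_neg_anti ha hab (by linarith)

lemma measure_F_bound (μ : Measure ℝ) [IsProbabilityMeasure μ] {C s : ℝ} (hC : 0 < C)
    (hs : 0 < s)
    (hdecay : ∀ ξ : ℝ, ‖ft1 μ ξ‖ ≤ C * (1 + |ξ|) ^ (-s / 2))
    (N : ℕ) (hN : 1 ≤ N) {D : ℝ} (hD0 : (1:ℝ) ≤ D) {c : ℝ} (hc : 0 < c)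
    (hNc : 2 * Real.pi * N * c ≤ 1) :
    (μ {x : ℝ | nint (D * x) < c}).toReal
      ≤ 4/N + 4*C*(1+D)^(-s/2) := by
  set B : ℝ := C * (1 + D) ^ (-s/2) with hB
  have hBpos : 0 < B := mul_pos hC (Real.rpow_pos_of_pos (by linarith) _)
  set g : ℝ → ℂ := fun x => ∑ j ∈ Finset.range N, efun (-(j:ℝ) * D) x with hg
  set f : ℝ → ℝ := fun x => Complex.normSq (g x) with hf
  have hgcont : Continuous g := continuous_finset_sum _ (fun j _ => efun_continuous _)
  have hfcont : Continuous f := Complex.continuous_normSq.comp hgcont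
  have hfbound : ∀ x, f x ≤ (N:ℝ)^2 := by
    intro x
    have habs : ‖g x‖ ≤ (N:ℝ) := by
      rw [hg]
      calc ‖∑ j ∈ Finset.range N, efun (-(j:ℝ) * D) x‖
          ≤ ∑ j ∈ Finset.range N, ‖efun (-(j:ℝ) * D) x‖ := by
            simpa using norm_sum_le (Finset.range N) (fun j => efun (-(j:ℝ) * D) x)
        _ = (N:ℝ) := by simp [efun_abs]
    calc f x = ‖g x‖ ^ 2 := (Complex.sq_norm _).symm
      _ ≤ (N:ℝ)^2 := by nlinarith [norm_nonneg (g x)]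
  have hfnonneg : ∀ x, 0 ≤ f x := fun x => Complex.normSq_nonneg _
  have hfint : Integrable f μ := by
    apply Integrable.mono' (integrable_const ((N:ℝ)^2)) hfcont.aestronglyMeasurable
    filter_upwards with x
    rw [Real.norm_eq_abs, abs_of_nonneg (hfnonneg x)]
    exact hfbound x
  -- expand integral of f
  have hGeq : (fun x => g x * (starRingEnd ℂ) (g x))
      = fun x => ∑ j ∈ Finset.range N, ∑ k ∈ Finset.range N, efun (((k:ℝ) - j) * D) x := by
    funext x
    rw [hg, map_sum, Finset.sum_mul_sum]
    apply Finset.sum_congr rfl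
    intro j _
    apply Finset.sum_congr rfl
    intro k _
    rw [efun_conj, efun_mul]
    congr 1
    ring
  have hGint : Integrable (fun x => g x * (starRingEnd ℂ) (g x)) μ := by
    rw [hGeq]
    exact integrable_finset_sum _ (fun j _ => integrable_finset_sum _
      (fun k _ => efun_integrable _ μ))
  have hfeq : ∀ x, f x = (g x * (starRingEnd ℂ) (g x)).re := by
    intro x
    rw [hf, Complex.mul_conj, Complex.ofReal_re]
  have hGsum : (∫ x, g x * (starRingEnd ℂ) (g x) ∂μ)
      = ∑ j ∈ Finset.range N, ∑ k ∈ Finset.range N, ft1 μ (((k:ℝ) - j) * D) := by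
    rw [hGeq]
    rw [integral_finset_sum _ (fun j _ => integrable_finset_sum _
      (fun k _ => efun_integrable _ μ))]
    apply Finset.sum_congr rfl
    intro j _
    rw [integral_finset_sum _ (fun k _ => efun_integrable _ μ)]
    exact Finset.sum_congr rfl (fun k _ => (ft1_eq μ _).symm)
  have hsplit : (∫ x, f x ∂μ)
      = (∑ j ∈ Finset.range N, ∑ k ∈ Finset.range N, ft1 μ (((k:ℝ) - j) * D)).re := by
    rw [MeasureTheory.integral_congr_ae (Filter.Eventually.of_forall hfeq)]
    exact (integral_re hGint).trans (congrArg Complex.re hGsum)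
  have hterm : ∀ j ∈ Finset.range N, ∀ k ∈ Finset.range N,
      ‖ft1 μ (((k:ℝ) - j) * D)‖ ≤ (if j = k then (1:ℝ) else B) := by
    intro j _ k _
    by_cases hjk : j = k
    · rw [if_pos hjk]
      exact ft1_abs_le_one μ _
    · rw [if_neg hjk]
      have h1 : (1:ℝ) ≤ |(k:ℝ) - (j:ℝ)| := by
        have : (k:ℤ) - (j:ℤ) ≠ 0 := sub_ne_zero.mpr (by exact_mod_cast Ne.symm hjk)
        have h2 : (1:ℤ) ≤ |(k:ℤ) - (j:ℤ)| := Int.one_le_abs this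
        calc (1:ℝ) = ((1:ℤ):ℝ) := by norm_num
          _ ≤ ((|(k:ℤ) - (j:ℤ)| : ℤ) : ℝ) := by exact_mod_cast h2
          _ = |(k:ℝ) - (j:ℝ)| := by rw [Int.cast_abs]; push_cast; ring_nf
      have hxi : D ≤ |((k:ℝ) - j) * D| := by
        rw [abs_mul, abs_of_nonneg (by linarith : (0:ℝ) ≤ D)]
        nlinarith
      calc ‖ft1 μ (((k:ℝ) - j) * D)‖
          ≤ C * (1 + |((k:ℝ) - j) * D|) ^ (-s/2) := hdecay _
        _ ≤ C * (1 + D) ^ (-s/2) := by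
            apply mul_le_mul_of_nonneg_left _ hC.le
            exact rpow_neg_anti' (by linarith) (by linarith) hs.le
        _ = B := hB.symm
  have hintf : (∫ x, f x ∂μ) ≤ N + N^2 * B := by
    have h1 : (∫ x, f x ∂μ)
        ≤ ‖∑ j ∈ Finset.range N, ∑ k ∈ Finset.range N, ft1 μ (((k:ℝ) - j) * D)‖ := by
      rw [hsplit]
      exact Complex.re_le_norm _
    have h2 : ‖∑ j ∈ Finset.range N, ∑ k ∈ Finset.range N, ft1 μ (((k:ℝ) - j) * D)‖
        ≤ ∑ j ∈ Finset.range N, ∑ k ∈ Finset.range N, (if j = k then (1:ℝ) else B) := by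
      calc ‖∑ j ∈ Finset.range N, ∑ k ∈ Finset.range N, ft1 μ (((k:ℝ) - j) * D)‖
          ≤ ∑ j ∈ Finset.range N, ‖∑ k ∈ Finset.range N, ft1 μ (((k:ℝ) - j) * D)‖ := by
            simpa using norm_sum_le (Finset.range N)
              (fun j => ∑ k ∈ Finset.range N, ft1 μ (((k:ℝ) - j) * D))
        _ ≤ ∑ j ∈ Finset.range N, ∑ k ∈ Finset.range N, ‖ft1 μ (((k:ℝ) - j) * D)‖ := by
            apply Finset.sum_le_sum
            intro j _
            simpa using norm_sum_le (Finset.range N)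
              (fun k => ft1 μ (((k:ℝ) - j) * D))
        _ ≤ _ := by
            apply Finset.sum_le_sum
            intro j hj
            exact Finset.sum_le_sum (fun k hk => hterm j hj k hk)
    have h3 : ∑ j ∈ Finset.range N, ∑ k ∈ Finset.range N, (if j = k then (1:ℝ) else B)
        ≤ N + N^2 * B := by
      have hinner : ∀ j ∈ Finset.range N,
          ∑ k ∈ Finset.range N, (if j = k then (1:ℝ) else B) ≤ 1 + N * B := by
        intro j hj
        have : ∀ k ∈ Finset.range N, (if j = k then (1:ℝ) else B)
            ≤ (if j = k then (1:ℝ) else 0) + B := by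
          intro k _
          by_cases h : j = k <;> simp [h] <;> linarith
        calc ∑ k ∈ Finset.range N, (if j = k then (1:ℝ) else B)
            ≤ ∑ k ∈ Finset.range N, ((if j = k then (1:ℝ) else 0) + B) :=
              Finset.sum_le_sum this
          _ = (∑ k ∈ Finset.range N, (if j = k then (1:ℝ) else 0)) + N * B := by
              rw [Finset.sum_add_distrib, Finset.sum_const, Finset.card_range]
              ring
          _ = 1 + N * B := by
              rw [Finset.sum_ite_eq (Finset.range N) j (fun _ => (1:ℝ)), if_pos hj]
      calc ∑ j ∈ Finset.range N, ∑ k ∈ Finset.range N, (if j = k then (1:ℝ) else B)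
          ≤ ∑ _j ∈ Finset.range N, (1 + (N:ℝ) * B) := Finset.sum_le_sum hinner
        _ = N * (1 + (N:ℝ) * B) := by rw [Finset.sum_const, Finset.card_range]; ring
        _ = N + N^2 * B := by ring
    linarith
  -- indicator comparison
  have hmeasF : MeasurableSet {x : ℝ | nint (D * x) < c} := by
    have hm : Measurable fun x : ℝ => nint (D * x) :=
      measurable_nint.comp (measurable_id.const_mul D)
    exact hm measurableSet_Iio
  have hNpos : (0:ℝ) < N := by exact_mod_cast hN
  have hind : ∀ x, Set.indicator {x : ℝ | nint (D * x) < c} (1 : ℝ → ℝ) x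
      ≤ 4/(N:ℝ)^2 * f x := by
    intro x
    rw [Set.indicator_apply]
    split
    · rename_i hx
      have hge := sum_efun_normSq_ge hN hc hNc (hx : nint (D * x) < c)
      rw [hf, Pi.one_apply]
      calc (1:ℝ) = 4/(N:ℝ)^2 * ((N:ℝ)^2/4) := by field_simp
        _ ≤ 4/(N:ℝ)^2 * Complex.normSq (g x) := by
            apply mul_le_mul_of_nonneg_left _ (by positivity)
            exact hge
    · exact mul_nonneg (by positivity) (hfnonneg x)
  have hindint : Integrable (Set.indicator {x : ℝ | nint (D * x) < c} (1 : ℝ → ℝ)) μ :=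
    (integrable_const (1:ℝ)).indicator hmeasF
  have hstep : (μ {x : ℝ | nint (D * x) < c}).toReal ≤ 4/(N:ℝ)^2 * ∫ x, f x ∂μ := by
    rw [← Measure.real_def, ← MeasureTheory.integral_indicator_one hmeasF]
    calc ∫ x, Set.indicator {x : ℝ | nint (D * x) < c} (1 : ℝ → ℝ) x ∂μ
        ≤ ∫ x, 4/(N:ℝ)^2 * f x ∂μ :=
          integral_mono hindint (hfint.const_mul _) hind
      _ = 4/(N:ℝ)^2 * ∫ x, f x ∂μ := integral_const_mul _ _
  calc (μ {x : ℝ | nint (D * x) < c}).toReal ≤ 4/(N:ℝ)^2 * ∫ x, f x ∂μ := hstep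
    _ ≤ 4/(N:ℝ)^2 * ((N:ℝ) + (N:ℝ)^2 * B) := by
        apply mul_le_mul_of_nonneg_left hintf (by positivity)
    _ = 4/(N:ℝ) + 4 * B := by field_simp
    _ = 4/N + 4*C*(1+D)^(-s/2) := by rw [hB]; ring

lemma two_pow_le_fact (n : ℕ) : 2^n ≤ (n+1)! := by
  induction n with
  | zero => simp
  | succ n ih =>
      rw [pow_succ, Nat.factorial_succ]
      calc 2^n * 2 ≤ (n+1)! * 2 := Nat.mul_le_mul_right 2 ih
        _ ≤ (n+1)! * (n+2) := Nat.mul_le_mul_left _ (by omega)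
        _ = (n+2) * (n+1)! := Nat.mul_comm _ _

lemma nint_scale {m q Dnat : ℕ} (hmq : m * q = Dnat) (x : ℝ) :
    nint ((Dnat:ℝ) * x) ≤ (m:ℝ) * nint ((q:ℝ) * x) := by
  set a : ℤ := round ((q:ℝ) * x) with ha
  have h1 : nint ((Dnat:ℝ) * x) ≤ |(Dnat:ℝ) * x - ((m * a : ℤ):ℝ)| :=
    nint_le_abs_sub_int _ _
  have h2 : (Dnat:ℝ) * x - ((m * a : ℤ):ℝ) = (m:ℝ) * ((q:ℝ) * x - (a:ℝ)) := by
    have : (Dnat:ℝ) = (m:ℝ) * (q:ℝ) := by exact_mod_cast hmq.symm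
    rw [this]
    push_cast
    ring
  rw [h2, abs_mul, Nat.abs_cast] at h1
  exact h1


/-- There is a function `ψ : ℕ → [0, 1/2)` whose series diverges, yet `W(ψ, ℕ)` has
Fourier dimension `0`: no probability measure giving full mass to `W(ψ, ℕ)` has any
power-like Fourier decay. -/
theorem exists_divergent_psi_fourierDim_W_zero :
    ∃ ψ : ℕ → ℝ, (∀ q, 0 ≤ ψ q ∧ ψ q < 1 / 2) ∧
      Filter.Tendsto (fun N => ∑ q ∈ Finset.range N, ψ q) Filter.atTop Filter.atTop ∧
      ∀ μ : Measure ℝ, IsProbabilityMeasure μ → μ (W ψ Set.univ) = 1 →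
        ∀ s : ℝ, 0 < s →
          ¬ ∃ C : ℝ, 0 < C ∧ ∀ ξ : ℝ,
            ‖ft1 μ ξ‖ ≤ C * (1 + |ξ|) ^ (-s / 2) := by
  refine ⟨psi, ?_, ?_, ?_⟩
  · -- bounds
    intro q
    refine ⟨psi_nonneg q, ?_⟩
    rcases psi_spec q with h | ⟨n, m, hm1, hmK, hmq, h⟩
    · rw [h]; norm_num
    · rw [h]
      have h1 : cseq n ≤ 1/8 := by
        unfold cseq
        have : (1/2:ℝ)^n ≤ 1 := pow_le_one₀ (by norm_num) (by norm_num)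
        linarith
      have hm1' : (1:ℝ) ≤ (m:ℝ) := by exact_mod_cast hm1
      have h2 : cseq n / m ≤ cseq n := div_le_self (cseq_pos n).le hm1'
      linarith
  · -- divergence
    rw [Filter.tendsto_atTop]
    intro b
    obtain ⟨n, hn⟩ := exists_nat_ge b
    filter_upwards [Filter.eventually_ge_atTop ((Kfun n)! + 1)] with N hN
    have h1 := sum_psi_ge n
    have h2 : ∑ q ∈ Finset.range ((Kfun n)! + 1), psi q ≤ ∑ q ∈ Finset.range N, psi q :=
      Finset.sum_le_sum_of_subset_of_nonneg (Finset.range_subset_range.mpr hN)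
        (fun q _ _ => psi_nonneg q)
    linarith
  · -- Fourier dimension zero
    intro μ hμ hW s hs hex
    obtain ⟨C, hC, hdecay⟩ := hex
    set Fset : ℕ → Set ℝ := fun n => {x : ℝ | nint ((((Kfun n)! : ℕ) : ℝ) * x) < cseq n}
      with hFset
    have hsub : W psi Set.univ ⊆ Filter.limsup Fset Filter.atTop := by
      intro x hx
      obtain ⟨hx1, hx2⟩ := hx
      rw [Filter.mem_limsup_iff_frequently_mem, Filter.frequently_atTop]
      intro a
      obtain ⟨q, hqS, hq_gt⟩ := hx2.exists_gt ((Kfun a)!)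
      have hq2 : nint ((q:ℝ) * x) < psi q := hqS.2
      have hpsi_pos : 0 < psi q := lt_of_le_of_lt (nint_nonneg _) hq2
      rcases psi_spec q with h0 | ⟨n, m, hm1, hmK, hmq, heq⟩
      · rw [h0] at hpsi_pos; exact absurd hpsi_pos (lt_irrefl 0)
      refine ⟨n, ?_, ?_⟩
      · by_contra hna
        push_neg at hna
        have hfle : (Kfun n)! ≤ (Kfun a)! :=
          Nat.factorial_le (Kfun_strictMono.monotone hna.le)
        have hq_le : q ≤ (Kfun n)! := (block_bounds hm1 hmK hmq).2
        omega
      · show nint ((((Kfun n)! : ℕ):ℝ) * x) < cseq n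
        have hm0 : (0:ℝ) < (m:ℝ) := by exact_mod_cast hm1
        have key := nint_scale hmq x
        have h3 : (m:ℝ) * nint ((q:ℝ)*x) < (m:ℝ) * (cseq n / m) := by
          apply mul_lt_mul_of_pos_left _ hm0
          rw [← heq]
          exact hq2
        have h4 : (m:ℝ) * (cseq n / m) = cseq n := by field_simp
        linarith
    set rho : ℝ := (2:ℝ)^(-s/2) with hrho
    have hrho0 : 0 ≤ rho := Real.rpow_nonneg (by norm_num) _
    have hrho1 : rho < 1 := by
      apply Real.rpow_lt_one_of_one_lt_of_neg one_lt_two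
      linarith
    have hbound : ∀ n, μ (Fset n) ≤ ENNReal.ofReal (4*(1/2:ℝ)^n + 4*C*rho^n) := by
      intro n
      have hKn : n+1 ≤ Kfun n := by have := Kfun_lb n; omega
      have hD2 : 2^n ≤ (Kfun n)! := le_trans (two_pow_le_fact n) (Nat.factorial_le hKn)
      have hD1 : (1:ℝ) ≤ (((Kfun n)! : ℕ):ℝ) := by
        exact_mod_cast Nat.one_le_iff_ne_zero.mpr (Nat.factorial_ne_zero _)
      have hpow : (2:ℝ)^n * (1/2:ℝ)^n = 1 := by
        rw [← mul_pow]; norm_num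
      have hNc : 2 * Real.pi * ((2^n : ℕ):ℝ) * cseq n ≤ 1 := by
        push_cast
        unfold cseq
        have hπ4 : Real.pi ≤ 4 := Real.pi_le_four
        have hπ0 : 0 < Real.pi := Real.pi_pos
        calc 2 * Real.pi * (2:ℝ)^n * ((1/8) * (1/2)^n)
            = (Real.pi/4) * ((2:ℝ)^n * (1/2)^n) := by ring
          _ = Real.pi/4 := by rw [hpow]; ring
          _ ≤ 1 := by linarith
      have h := measure_F_bound μ hC hs hdecay (2^n) Nat.one_le_two_pow hD1 (cseq_pos n) hNc
      have hstep1 : 4/(((2^n : ℕ)):ℝ) = 4*(1/2:ℝ)^n := by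
        push_cast
        rw [div_eq_mul_inv, ← inv_pow]
        norm_num
      have h2n : ((2:ℝ))^n ≤ 1 + (((Kfun n)! : ℕ):ℝ) := by
        have hcast : ((2^n : ℕ):ℝ) ≤ (((Kfun n)! : ℕ):ℝ) := by exact_mod_cast hD2
        push_cast at hcast
        linarith
      have hstep2 : (1 + (((Kfun n)! : ℕ):ℝ))^(-s/2) ≤ rho^n := by
        calc (1 + (((Kfun n)! : ℕ):ℝ))^(-s/2) ≤ ((2:ℝ)^n)^(-s/2) :=
              rpow_neg_anti' (by positivity) h2n hs.le
          _ = rho^n := by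
              rw [hrho, ← Real.rpow_natCast ((2:ℝ)) n, ← Real.rpow_mul (by norm_num),
                mul_comm, Real.rpow_mul (by norm_num), Real.rpow_natCast]
      rw [ENNReal.le_ofReal_iff_toReal_le (measure_ne_top μ _) (by positivity)]
      have hfin : 4*C*(1 + (((Kfun n)! : ℕ):ℝ))^(-s/2) ≤ 4*C*rho^n := by
        apply mul_le_mul_of_nonneg_left hstep2 (by linarith)
      calc (μ (Fset n)).toReal ≤ 4/((2^n : ℕ):ℝ) + 4*C*(1 + (((Kfun n)! : ℕ):ℝ))^(-s/2) := h
        _ ≤ 4*(1/2:ℝ)^n + 4*C*rho^n := by rw [hstep1]; linarith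
    have hsummable : Summable (fun n : ℕ => 4*(1/2:ℝ)^n + 4*C*rho^n) :=
      Summable.add ((summable_geometric_of_lt_one (by norm_num) (by norm_num)).mul_left 4)
        ((summable_geometric_of_lt_one hrho0 hrho1).mul_left (4*C))
    have hsum : ∑' n, μ (Fset n) ≠ ⊤ := by
      have h1 : ∑' n, μ (Fset n) ≤ ∑' n, ENNReal.ofReal (4*(1/2:ℝ)^n + 4*C*rho^n) :=
        ENNReal.tsum_le_tsum hbound
      have h2 : ∑' n, ENNReal.ofReal (4*(1/2:ℝ)^n + 4*C*rho^n)
          = ENNReal.ofReal (∑' n, (4*(1/2:ℝ)^n + 4*C*rho^n)) :=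
        (ENNReal.ofReal_tsum_of_nonneg (fun n => by positivity) hsummable).symm
      rw [h2] at h1
      exact ne_top_of_le_ne_top ENNReal.ofReal_ne_top h1
    have hzero : μ (Filter.limsup Fset Filter.atTop) = 0 :=
      MeasureTheory.measure_limsup_atTop_eq_zero hsum
    have hfinal : μ (W psi Set.univ) = 0 :=
      le_antisymm (le_trans (measure_mono hsub) (le_of_eq hzero)) (by simp)
    rw [hW] at hfinal
    exact one_ne_zero hfinal
end

section
/- Let 0 < s < 1. There is a constant C = C(s) > 0 such that for every q ∈ ℕ with q ≥ 1 and every real number 0 < ψ < 1/4, ∑_{j ∈ I} ∑_{k=1}^∞ q·2^{−j} · min{1/k, ψ·2^j/q} · (qk)^{−s} ≤ C · q^{−s} ψ^s, where I = {j ∈ ℕ : 2q ≤ 2^j ≤ q/ψ}. -/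
open Finset Filter Topology

namespace Case2Aux

/-- Bernoulli / tangent-line bound for exponents in `[0,1]`. -/
lemma bern {t γ : ℝ} (ht : 0 ≤ t) (hγ0 : 0 ≤ γ) (hγ1 : γ ≤ 1) :
    t ^ γ ≤ 1 + γ * (t - 1) := by
  have h := Real.geom_mean_le_arith_mean2_weighted hγ0 (by linarith : (0:ℝ) ≤ 1 - γ)
      ht zero_le_one (by ring)
  rw [Real.one_rpow, mul_one] at h
  linarith

lemma head_term {γ : ℝ} (hγ0 : 0 < γ) (hγ1 : γ ≤ 1) {x : ℝ} (hx : 1 ≤ x) :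
    γ * x ^ (γ - 1) ≤ x ^ γ - (x - 1) ^ γ := by
  have hx0 : (0:ℝ) < x := lt_of_lt_of_le one_pos hx
  have h1 : ((x-1)/x) ^ γ ≤ 1 + γ * ((x-1)/x - 1) :=
    bern (div_nonneg (by linarith) hx0.le) hγ0.le hγ1
  have h3 : (x-1)/x - 1 = -(1/x) := by field_simp; ring
  rw [h3] at h1
  have h2 : (x-1) ^ γ = ((x-1)/x) ^ γ * x ^ γ := by
    rw [Real.div_rpow (by linarith) hx0.le]
    field_simp
  have hxγ : (0:ℝ) < x ^ γ := Real.rpow_pos_of_pos hx0 _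
  have h4 : (x-1) ^ γ ≤ (1 - γ * (1/x)) * x ^ γ := by
    rw [h2]
    have := mul_le_mul_of_nonneg_right h1 hxγ.le
    nlinarith
  have h5 : x ^ γ * (1/x) = x ^ (γ - 1) := by
    rw [Real.rpow_sub_one (ne_of_gt hx0)]
    ring
  nlinarith

lemma tail_term {s : ℝ} (hs0 : 0 < s) (hs1 : s < 1) {x : ℝ} (hx : 1 ≤ x) :
    s * (x+1) ^ (-1-s) ≤ x ^ (-s) - (x+1) ^ (-s) := by
  have hx0 : (0:ℝ) < x := lt_of_lt_of_le one_pos hx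
  have hx1 : (0:ℝ) < x + 1 := by linarith
  set u : ℝ := 1/(x+1) with hu
  have hu0 : 0 < u := by positivity
  have hu2 : u ≤ 1/2 := by
    rw [hu]
    rw [div_le_div_iff₀ hx1 (by norm_num)]
    linarith
  have h1 : (x/(x+1)) ^ s ≤ 1 - s * u := by
    have := bern (t := x/(x+1)) (by positivity) hs0.le hs1.le
    have he : x/(x+1) - 1 = -u := by rw [hu]; field_simp; ring
    rw [he] at this
    linarith
  have hpos : (0:ℝ) < 1 - s * u := by nlinarith
  have hfrac : (0:ℝ) < (x/(x+1)) ^ s := Real.rpow_pos_of_pos (by positivity) _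
  -- x^(-s) = ((x/(x+1))^s)⁻¹ * (x+1)^(-s)
  have hsplit : x ^ (-s) = ((x/(x+1)) ^ s)⁻¹ * (x+1) ^ (-s) := by
    rw [← Real.rpow_neg (by positivity : (0:ℝ) ≤ x/(x+1)), ← Real.mul_rpow (by positivity)
      (by positivity)]
    rw [div_mul_cancel₀]
    linarith
  have hinv : (1 - s*u)⁻¹ ≤ ((x/(x+1)) ^ s)⁻¹ := inv_anti₀ hfrac h1
  have hber : 1 + s*u ≤ (1 - s*u)⁻¹ := by
    rw [inv_eq_one_div, le_div_iff₀ hpos]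
    nlinarith [sq_nonneg (s*u)]
  have hP : (0:ℝ) < (x+1) ^ (-s) := Real.rpow_pos_of_pos hx1 _
  have h6 : (1 + s*u) * (x+1) ^ (-s) ≤ x ^ (-s) := by
    rw [hsplit]
    exact mul_le_mul_of_nonneg_right (hber.trans hinv) hP.le
  have h7 : (x+1) ^ (-1-s) = u * (x+1) ^ (-s) := by
    rw [show (-1-s : ℝ) = -s-1 by ring, Real.rpow_sub_one (ne_of_gt hx1), hu]
    ring
  rw [h7]
  nlinarith

lemma sum_head {s : ℝ} (hs0 : 0 < s) (hs1 : s < 1) (K : ℕ) :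
    ∑ i ∈ range K, ((i:ℝ)+1) ^ (-s) ≤ (K:ℝ) ^ (1-s) / (1-s) := by
  have h1s : (0:ℝ) < 1 - s := by linarith
  have per : ∀ i ∈ range K,
      ((i:ℝ)+1) ^ (-s) ≤ (((i:ℝ)+1) ^ (1-s) - (i:ℝ) ^ (1-s)) / (1-s) := by
    intro i _
    rw [le_div_iff₀ h1s]
    have := head_term h1s (by linarith) (show (1:ℝ) ≤ (i:ℝ)+1 by have : (0:ℝ) ≤ (i:ℝ) := Nat.cast_nonneg i; linarith)
    have he : ((i:ℝ)+1) - 1 = (i:ℝ) := by ring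
    rw [he] at this
    have he2 : (1-s) - 1 = -s := by ring
    rw [he2] at this
    linarith
  calc ∑ i ∈ range K, ((i:ℝ)+1) ^ (-s)
      ≤ ∑ i ∈ range K, ((((i:ℝ)+1) ^ (1-s) - (i:ℝ) ^ (1-s)) / (1-s)) :=
        Finset.sum_le_sum per
    _ = (∑ i ∈ range K, ((((i+1:ℕ):ℝ)) ^ (1-s) - ((i:ℕ):ℝ) ^ (1-s))) / (1-s) := by
        rw [Finset.sum_div]
        congr 1 with i
        push_cast
        ring_nf
    _ = ((K:ℝ) ^ (1-s) - ((0:ℕ):ℝ) ^ (1-s)) / (1-s) := by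
        rw [Finset.sum_range_sub (fun n : ℕ => ((n:ℝ)) ^ (1-s))]
    _ = (K:ℝ) ^ (1-s) / (1-s) := by
        rw [Nat.cast_zero, Real.zero_rpow (by linarith : (1:ℝ)-s ≠ 0), sub_zero]

lemma sum_tail {s : ℝ} (hs0 : 0 < s) (hs1 : s < 1) (K : ℕ) (hK : 1 ≤ K) :
    ∑' n : ℕ, ((n:ℝ) + K + 1) ^ (-1-s) ≤ (K:ℝ) ^ (-s) / s := by
  set h : ℕ → ℝ := fun n => ((n:ℝ) + K) ^ (-s) with hh
  have hKR : (1:ℝ) ≤ (K:ℝ) := by exact_mod_cast hK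
  have hpos : ∀ n : ℕ, (0:ℝ) < (n:ℝ) + K := by
    intro n; have : (0:ℝ) ≤ (n:ℝ) := Nat.cast_nonneg n; linarith
  have hmono : ∀ n : ℕ, 0 ≤ h n - h (n+1) := by
    intro n
    have : h (n+1) ≤ h n := by
      apply Real.rpow_le_rpow_of_nonpos (hpos n) (by push_cast; linarith) (by linarith)
    linarith
  have htel : HasSum (fun n => h n - h (n+1)) ((K:ℝ) ^ (-s)) := by
    rw [hasSum_iff_tendsto_nat_of_nonneg hmono]
    have hps : ∀ n : ℕ, ∑ i ∈ range n, (h i - h (i+1)) = h 0 - h n :=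
      fun n => Finset.sum_range_sub' h n
    simp only [hps]
    have hlim : Tendsto h atTop (𝓝 0) := by
      have t1 : Tendsto (fun n : ℕ => (n:ℝ) + K) atTop atTop :=
        tendsto_atTop_add_const_right atTop ((K:ℕ):ℝ) tendsto_natCast_atTop_atTop
      exact (tendsto_rpow_neg_atTop hs0).comp t1
    have : Tendsto (fun n : ℕ => h 0 - h n) atTop (𝓝 (h 0 - 0)) :=
      tendsto_const_nhds.sub hlim
    simpa [hh] using this
  have per : ∀ n : ℕ, ((n:ℝ) + K + 1) ^ (-1-s) ≤ (h n - h (n+1)) / s := by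
    intro n
    rw [le_div_iff₀ hs0]
    have := tail_term hs0 hs1 (show (1:ℝ) ≤ (n:ℝ) + K by
      have : (0:ℝ) ≤ (n:ℝ) := Nat.cast_nonneg n; linarith)
    have he : h (n+1) = ((n:ℝ) + K + 1) ^ (-s) := by
      rw [hh]; push_cast; ring_nf
    rw [he]
    simp only [hh]
    linarith
  have hsumR : Summable (fun n => (h n - h (n+1)) / s) := htel.summable.div_const s
  have hsumL : Summable (fun n : ℕ => ((n:ℝ) + K + 1) ^ (-1-s)) := by
    apply Summable.of_nonneg_of_le (fun n => Real.rpow_nonneg (by positivity) _) per hsumR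
  calc ∑' n : ℕ, ((n:ℝ) + K + 1) ^ (-1-s)
      ≤ ∑' n : ℕ, (h n - h (n+1)) / s := hsumL.tsum_le_tsum per hsumR
    _ = (∑' n : ℕ, (h n - h (n+1))) / s := by rw [tsum_div_const]
    _ = (K:ℝ) ^ (-s) / s := by rw [htel.tsum_eq]

lemma inner_bound {s : ℝ} (hs0 : 0 < s) (hs1 : s < 1) {a : ℝ} (ha0 : 0 < a) (ha1 : a ≤ 1) :
    ∑' k : ℕ+, min (1/((k:ℕ):ℝ)) a * ((k:ℕ):ℝ) ^ (-s)
      ≤ ((2:ℝ) ^ (1-s) / (1-s) + 1/s) * a ^ s := by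
  have h1s : (0:ℝ) < 1 - s := by linarith
  set g : ℕ → ℝ := fun n => min (1/((n:ℝ)+1)) a * ((n:ℝ)+1) ^ (-s) with hg
  have hpos : ∀ n : ℕ, (0:ℝ) < (n:ℝ)+1 := fun n => by positivity
  have key : ∑' k : ℕ+, min (1/((k:ℕ):ℝ)) a * ((k:ℕ):ℝ) ^ (-s) = ∑' n : ℕ, g n := by
    rw [← Equiv.tsum_eq (Equiv.pnatEquivNat.symm)
      (fun k : ℕ+ => min (1/((k:ℕ):ℝ)) a * ((k:ℕ):ℝ) ^ (-s))]
    apply tsum_congr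
    intro n
    have : ((Equiv.pnatEquivNat.symm n : ℕ+) : ℕ) = n + 1 := by
      simp [Equiv.pnatEquivNat, Nat.succPNat]
    rw [this]
    push_cast
    simp [hg, one_div]
  have hg_nonneg : ∀ n, 0 ≤ g n := by
    intro n
    apply mul_nonneg (le_min (by positivity) ha0.le) (Real.rpow_nonneg (hpos n).le _)
  have hg_le : ∀ n, g n ≤ ((n:ℝ)+1) ^ (-1-s) := by
    intro n
    have h1 : g n ≤ (1/((n:ℝ)+1)) * ((n:ℝ)+1) ^ (-s) :=
      mul_le_mul_of_nonneg_right (min_le_left _ _) (Real.rpow_nonneg (hpos n).le _)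
    have h2 : (1/((n:ℝ)+1)) * ((n:ℝ)+1) ^ (-s) = ((n:ℝ)+1) ^ (-1-s) := by
      rw [show (-1-s:ℝ) = -s-1 by ring, Real.rpow_sub_one (ne_of_gt (hpos n))]
      ring
    linarith
  have hsum_dom : Summable (fun n : ℕ => ((n:ℝ)+1) ^ (-1-s)) := by
    have h0 : Summable (fun n : ℕ => ((n:ℕ):ℝ) ^ (-1-s)) :=
      Real.summable_nat_rpow.mpr (by linarith)
    have := (summable_nat_add_iff 1).mpr h0
    apply this.congr
    intro n
    push_cast
    norm_num
  have hg_sum : Summable g := Summable.of_nonneg_of_le hg_nonneg hg_le hsum_dom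
  set K : ℕ := ⌈1/a⌉₊ with hK
  have ha_inv : (1:ℝ) ≤ 1/a := by rw [le_div_iff₀ ha0]; linarith
  have hK1 : 1 ≤ K := Nat.one_le_ceil_iff.mpr (by positivity)
  have hKa : 1/a ≤ (K:ℝ) := Nat.le_ceil _
  have hK2 : (K:ℝ) ≤ 2/a := by
    have := Nat.ceil_lt_add_one (show (0:ℝ) ≤ 1/a by positivity)
    have hsplit2 : (2:ℝ)/a = 1/a + 1/a := by ring
    have h2a : (1:ℝ)/a + 1 ≤ 2/a := by rw [hsplit2]; linarith
    linarith [this.le.trans h2a]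
  rw [key, ← hg_sum.sum_add_tsum_nat_add K]
  have head : ∑ i ∈ range K, g i ≤ (2:ℝ) ^ (1-s) / (1-s) * a ^ s := by
    have step1 : ∑ i ∈ range K, g i ≤ ∑ i ∈ range K, a * ((i:ℝ)+1) ^ (-s) := by
      apply Finset.sum_le_sum
      intro i _
      exact mul_le_mul_of_nonneg_right (min_le_right _ _) (Real.rpow_nonneg (hpos i).le _)
    have step2 : ∑ i ∈ range K, a * ((i:ℝ)+1) ^ (-s) = a * ∑ i ∈ range K, ((i:ℝ)+1) ^ (-s) :=
      (Finset.mul_sum _ _ _).symm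
    have step3 : a * ∑ i ∈ range K, ((i:ℝ)+1) ^ (-s) ≤ a * ((K:ℝ) ^ (1-s) / (1-s)) :=
      mul_le_mul_of_nonneg_left (sum_head hs0 hs1 K) ha0.le
    have step4 : (K:ℝ) ^ (1-s) ≤ (2/a) ^ (1-s) :=
      Real.rpow_le_rpow (Nat.cast_nonneg K) hK2 h1s.le
    have step5 : a * ((K:ℝ) ^ (1-s) / (1-s)) ≤ a * ((2/a) ^ (1-s) / (1-s)) := by
      gcongr
    have haa : a / a ^ (1-s) = a ^ s := by
      nth_rewrite 1 [← Real.rpow_one a]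
      rw [← Real.rpow_sub ha0]
      norm_num
    have step6 : a * ((2/a) ^ (1-s) / (1-s)) = (2:ℝ) ^ (1-s) / (1-s) * a ^ s := by
      rw [Real.div_rpow (by norm_num) ha0.le]
      have hre : a * ((2:ℝ) ^ (1-s) / a ^ (1-s) / (1-s))
          = (2:ℝ) ^ (1-s) / (1-s) * (a / a ^ (1-s)) := by ring
      rw [hre, haa]
    linarith
  have tail : ∑' n : ℕ, g (n + K) ≤ 1/s * a ^ s := by
    have per : ∀ n : ℕ, g (n + K) ≤ ((n:ℝ) + K + 1) ^ (-1-s) := by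
      intro n
      have := hg_le (n + K)
      have hc : (((n+K:ℕ)):ℝ) + 1 = (n:ℝ) + K + 1 := by push_cast; ring
      rw [hc] at this
      exact this
    have hsumL : Summable (fun n : ℕ => g (n + K)) := (summable_nat_add_iff K).mpr hg_sum
    have hsumR : Summable (fun n : ℕ => ((n:ℝ) + K + 1) ^ (-1-s)) := by
      have := (summable_nat_add_iff K).mpr hsum_dom
      apply this.congr
      intro n
      push_cast
      ring_nf
    have t1 : ∑' n : ℕ, g (n + K) ≤ ∑' n : ℕ, ((n:ℝ) + K + 1) ^ (-1-s) :=
      hsumL.tsum_le_tsum per hsumR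
    have t2 := sum_tail hs0 hs1 K hK1
    have t3 : (K:ℝ) ^ (-s) ≤ a ^ s := by
      have h1 : (K:ℝ) ^ (-s) ≤ (1/a) ^ (-s) :=
        Real.rpow_le_rpow_of_nonpos (by positivity) hKa (by linarith)
      have h2 : ((1:ℝ)/a) ^ (-s) = a ^ s := by
        rw [one_div, Real.inv_rpow ha0.le, Real.rpow_neg ha0.le, inv_inv]
      linarith [h2 ▸ h1]
    have t4 : (K:ℝ) ^ (-s) / s ≤ a ^ s / s := by gcongr
    calc ∑' n : ℕ, g (n + K) ≤ (K:ℝ) ^ (-s) / s := t1.trans t2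
      _ ≤ a ^ s / s := t4
      _ = 1/s * a ^ s := by ring
  have : ((2:ℝ) ^ (1-s) / (1-s) + 1/s) * a ^ s
      = (2:ℝ) ^ (1-s) / (1-s) * a ^ s + 1/s * a ^ s := by ring
  rw [this]
  exact add_le_add head tail

end Case2Aux

open Case2Aux

/-- Case 2 estimate: for `0 < s < 1` there is `C = C(s)` with
`∑_{j∈I} ∑_{k≥1} q2^{-j} · min{1/k, ψ2^j/q} · (qk)^{-s} ≤ C q^{-s} ψ^s`,
where `I = {j ∈ ℕ : 2q ≤ 2^j ≤ q/ψ}`. -/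
theorem case2_sum_le (s : ℝ) (hs0 : 0 < s) (hs1 : s < 1) :
    ∃ C : ℝ, 0 < C ∧
      ∀ q : ℕ, 1 ≤ q → ∀ ψ : ℝ, 0 < ψ → ψ < 1 / 4 →
        (∑' j : {j : ℕ // 2 * (q : ℝ) ≤ (2 : ℝ) ^ (j : ℝ) ∧ (2 : ℝ) ^ (j : ℝ) ≤ q / ψ},
          ∑' k : ℕ+,
            (q : ℝ) * (2 : ℝ) ^ (-((j : ℕ) : ℝ)) *
              min (1 / ((k : ℕ) : ℝ)) (ψ * (2 : ℝ) ^ (((j : ℕ)) : ℝ) / q) *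
                ((q : ℝ) * ((k : ℕ) : ℝ)) ^ (-s)) ≤
          C * (q : ℝ) ^ (-s) * ψ ^ s := by
  have h1s : (0:ℝ) < 1 - s := by linarith
  set C₀ : ℝ := (2:ℝ) ^ (1-s) / (1-s) + 1/s with hC₀
  have hC₀0 : 0 < C₀ := by
    have : (0:ℝ) < (2:ℝ) ^ (1-s) := Real.rpow_pos_of_pos two_pos _
    positivity
  set r : ℝ := (2:ℝ) ^ (s-1) with hr
  have hr0 : 0 < r := Real.rpow_pos_of_pos two_pos _
  have hr1 : r < 1 := Real.rpow_lt_one_of_one_lt_of_neg one_lt_two (by linarith)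
  have h1r : 0 < 1 - r := by linarith
  refine ⟨C₀ * r * (1 - r)⁻¹, by positivity, ?_⟩
  intro q hq ψ hψ0 hψ4
  have hq0 : (0:ℝ) < (q:ℝ) := by exact_mod_cast hq
  set n₀ : ℕ := Nat.clog 2 (2*q) with hn₀
  have hn₀pow : 2*q ≤ 2^n₀ := Nat.le_pow_clog one_lt_two _
  set P := {j : ℕ // 2 * (q : ℝ) ≤ (2 : ℝ) ^ (j : ℝ) ∧ (2 : ℝ) ^ (j : ℝ) ≤ q / ψ} with hP
  set G : ℕ → ℝ := fun m => (C₀ * r * (q:ℝ) ^ (-s) * ψ ^ s) * r ^ m with hG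
  have hGnonneg : ∀ m, 0 ≤ G m := by
    intro m
    have h1 : (0:ℝ) ≤ (q:ℝ) ^ (-s) := Real.rpow_nonneg hq0.le _
    have h2 : (0:ℝ) ≤ ψ ^ s := Real.rpow_nonneg hψ0.le _
    positivity
  have hGsum : Summable G := (summable_geometric_of_lt_one hr0.le hr1).mul_left _
  -- facts about each j in the index set
  have hjn₀ : ∀ j : P, n₀ ≤ (j:ℕ) := by
    intro ⟨j, hj1, hj2⟩
    have hcast : (2:ℝ) ^ ((j:ℕ):ℝ) = ((2^j : ℕ) : ℝ) := by
      rw [Real.rpow_natCast]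
      push_cast
      ring
    have : ((2*q : ℕ):ℝ) ≤ ((2^j : ℕ):ℝ) := by
      rw [← hcast]
      push_cast
      exact hj1
    exact (Nat.clog_le_iff_le_pow one_lt_two).mpr (by exact_mod_cast this)
  -- the inner sum function
  set f : P → ℝ := fun j =>
    ∑' k : ℕ+,
      (q : ℝ) * (2 : ℝ) ^ (-(((j:ℕ)) : ℝ)) *
        min (1 / ((k : ℕ) : ℝ)) (ψ * (2 : ℝ) ^ ((((j:ℕ))) : ℝ) / q) *
          ((q : ℝ) * ((k : ℕ) : ℝ)) ^ (-s) with hf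
  have key : ∀ j : P, f j ≤ G ((j:ℕ) - n₀) := by
    intro j
    obtain ⟨hj1, hj2⟩ := j.2
    set A : ℝ := (2:ℝ) ^ (((j:ℕ)):ℝ) with hA
    have hA0 : 0 < A := Real.rpow_pos_of_pos two_pos _
    set a : ℝ := ψ * A / q with ha
    have ha0 : 0 < a := by positivity
    have ha1 : a ≤ 1 := by
      rw [ha, div_le_one hq0]
      rw [le_div_iff₀ hψ0] at hj2
      linarith [hj2]
    have hrw : f j = ((q:ℝ) * A⁻¹ * (q:ℝ) ^ (-s)) *
        ∑' k : ℕ+, min (1/((k:ℕ):ℝ)) a * ((k:ℕ):ℝ) ^ (-s) := by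
      rw [hf]
      rw [← tsum_mul_left]
      apply tsum_congr
      intro k
      have hk0 : (0:ℝ) ≤ ((k:ℕ):ℝ) := Nat.cast_nonneg _
      rw [Real.mul_rpow hq0.le hk0, Real.rpow_neg two_pos.le]
      ring
    have hcnonneg : (0:ℝ) ≤ (q:ℝ) * A⁻¹ * (q:ℝ) ^ (-s) := by positivity
    have step1 : f j ≤ ((q:ℝ) * A⁻¹ * (q:ℝ) ^ (-s)) * (C₀ * a ^ s) := by
      rw [hrw]
      exact mul_le_mul_of_nonneg_left (inner_bound hs0 hs1 ha0 ha1) hcnonneg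
    -- now the rpow algebra
    have hm : (j:ℕ) = n₀ + ((j:ℕ) - n₀) := by
      have := hjn₀ j
      omega
    set m : ℕ := (j:ℕ) - n₀ with hmdef
    have has : a ^ s = ψ ^ s * A ^ s / (q:ℝ) ^ s := by
      rw [ha, Real.div_rpow (by positivity) hq0.le, Real.mul_rpow hψ0.le hA0.le]
    have hAs : A⁻¹ * A ^ s = A ^ (s-1) := by
      rw [Real.rpow_sub hA0, Real.rpow_one]
      ring
    have hqpow : (q:ℝ) * (q:ℝ) ^ (-s) / (q:ℝ) ^ s = (q:ℝ) ^ (1-2*s) := by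
      nth_rewrite 1 [← Real.rpow_one (q:ℝ)]
      rw [← Real.rpow_add hq0, ← Real.rpow_sub hq0]
      norm_num
      ring_nf
    have hA_split : A ^ (s-1) ≤ ((2*q:ℝ)) ^ (s-1) * r ^ m := by
      have e1 : A ^ (s-1) = (2:ℝ) ^ ((((j:ℕ)):ℝ) * (s-1)) := by
        rw [hA, ← Real.rpow_mul two_pos.le]
      have e2 : (((j:ℕ)):ℝ) = (n₀:ℝ) + (m:ℝ) := by
        rw [hm]; push_cast; ring
      have e3 : (2:ℝ) ^ ((((j:ℕ)):ℝ) * (s-1))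
          = (2:ℝ) ^ ((n₀:ℝ) * (s-1)) * (2:ℝ) ^ ((m:ℝ) * (s-1)) := by
        rw [e2, ← Real.rpow_add two_pos]
        ring_nf
      have e4 : (2:ℝ) ^ ((m:ℝ) * (s-1)) = r ^ m := by
        rw [mul_comm, Real.rpow_mul two_pos.le, Real.rpow_natCast]
      have e5 : (2:ℝ) ^ ((n₀:ℝ) * (s-1)) ≤ ((2*q:ℝ)) ^ (s-1) := by
        have b1 : (2:ℝ) ^ ((n₀:ℝ) * (s-1)) = ((2:ℝ) ^ ((n₀:ℝ))) ^ (s-1) := by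
          rw [← Real.rpow_mul two_pos.le]
        have b2 : (2*q:ℝ) ≤ (2:ℝ) ^ ((n₀:ℝ)) := by
          rw [Real.rpow_natCast]
          exact_mod_cast hn₀pow
        rw [b1]
        exact Real.rpow_le_rpow_of_nonpos (by positivity) b2 (by linarith)
      calc A ^ (s-1) = (2:ℝ) ^ ((n₀:ℝ) * (s-1)) * (2:ℝ) ^ ((m:ℝ) * (s-1)) := by
            rw [e1, e3]
        _ ≤ ((2*q:ℝ)) ^ (s-1) * r ^ m := by
            rw [e4]
            apply mul_le_mul_of_nonneg_right e5 (by positivity)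
    have hfinal : ((q:ℝ) * A⁻¹ * (q:ℝ) ^ (-s)) * (C₀ * a ^ s) ≤ G m := by
      have lhs_eq : ((q:ℝ) * A⁻¹ * (q:ℝ) ^ (-s)) * (C₀ * a ^ s)
          = C₀ * ψ ^ s * ((q:ℝ) ^ (1-2*s)) * (A ^ (s-1)) := by
        rw [has, ← hqpow, ← hAs]
        ring
      rw [lhs_eq, hG]
      have h2q : ((2*q:ℝ)) ^ (s-1) = r * (q:ℝ) ^ (s-1) := by
        rw [Real.mul_rpow two_pos.le hq0.le, hr]
      have hq2 : (q:ℝ) ^ (1-2*s) * ((q:ℝ) ^ (s-1)) = (q:ℝ) ^ (-s) := by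
        rw [← Real.rpow_add hq0]
        ring_nf
      calc C₀ * ψ ^ s * ((q:ℝ) ^ (1-2*s)) * (A ^ (s-1))
          ≤ C₀ * ψ ^ s * ((q:ℝ) ^ (1-2*s)) * (((2*q:ℝ)) ^ (s-1) * r ^ m) := by
            apply mul_le_mul_of_nonneg_left hA_split
            have : (0:ℝ) ≤ ψ ^ s := Real.rpow_nonneg hψ0.le _
            have : (0:ℝ) ≤ (q:ℝ) ^ (1-2*s) := Real.rpow_nonneg hq0.le _
            positivity
        _ = (C₀ * r * (q:ℝ) ^ (-s) * ψ ^ s) * r ^ m := by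
            rw [h2q, ← hq2]
            ring
    exact step1.trans hfinal
  -- nonnegativity of f
  have hf_nonneg : ∀ j : P, 0 ≤ f j := by
    intro j
    apply tsum_nonneg
    intro k
    have h1 : (0:ℝ) ≤ min (1 / ((k:ℕ):ℝ)) (ψ * (2:ℝ) ^ ((((j:ℕ))):ℝ) / q) := by
      apply le_min (by positivity) (by positivity)
    have h2 : (0:ℝ) ≤ ((q:ℝ) * ((k:ℕ):ℝ)) ^ (-s) := Real.rpow_nonneg (by positivity) _
    have h3 : (0:ℝ) ≤ (q:ℝ) * (2:ℝ) ^ (-(((j:ℕ)):ℝ)) := by positivity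
    calc (0:ℝ) ≤ ((q:ℝ) * (2:ℝ) ^ (-(((j:ℕ)):ℝ)) * min (1 / ((k:ℕ):ℝ))
        (ψ * (2:ℝ) ^ ((((j:ℕ))):ℝ) / q)) * (((q:ℝ) * ((k:ℕ):ℝ)) ^ (-s)) := by
          apply mul_nonneg (mul_nonneg h3 h1) h2
      _ = _ := by ring
  -- injection
  set inj : P → ℕ := fun j => (j:ℕ) - n₀ with hinj
  have hinj_inj : Function.Injective inj := by
    intro j₁ j₂ h
    have h1 := hjn₀ j₁
    have h2 := hjn₀ j₂
    apply Subtype.ext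
    simp only [hinj] at h
    omega
  have hfsum : Summable f := by
    apply Summable.of_nonneg_of_le hf_nonneg key
    exact hGsum.comp_injective hinj_inj
  calc ∑' j : P, f j ≤ ∑' m : ℕ, G m := by
        apply hfsum.tsum_le_tsum_of_inj inj hinj_inj (fun c _ => hGnonneg c) key hGsum
    _ = (C₀ * r * (q:ℝ) ^ (-s) * ψ ^ s) * (1-r)⁻¹ := by
        rw [hG, tsum_mul_left, tsum_geometric_of_lt_one hr0.le hr1]
    _ = C₀ * r * (1-r)⁻¹ * (q:ℝ) ^ (-s) * ψ ^ s := by ring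
end

section
/- Let 0 < s < 1. There is a constant C = C(s) > 0 such that for every q ∈ ℕ with q ≥ 1 and every real number 0 < ψ < 1/4, ∑_{j ∈ I} ∑_{k=1}^∞ min{1/k, q·2^{−j}} · (ψ·2^j/q) · (qk)^{−s} ≤ C · q^{−s} ψ^s, where I = {j ∈ ℕ : 2q ≤ 2^j ≤ q/ψ}. -/
open Real Finset

private lemma bern1 {s : ℝ} (hs0 : 0 < s) (hs1 : s < 1) {x : ℝ} (hx : 1 ≤ x) :
    (1 - s) * x ^ (-s) ≤ x ^ (1 - s) - (x - 1) ^ (1 - s) := by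
  have hx0 : (0:ℝ) < x := lt_of_lt_of_le one_pos hx
  have ht : 1/x ≤ 1 := by rw [div_le_one hx0]; exact hx
  have ht0 : 0 < 1/x := by positivity
  have hB : (1 + -(1/x)) ^ (1 - s) ≤ 1 + (1 - s) * -(1/x) :=
    rpow_one_add_le_one_add_mul_self (by linarith) (by linarith) (by linarith)
  have hmul : (x - 1) ^ (1 - s) = x ^ (1 - s) * (1 + -(1/x)) ^ (1 - s) := by
    rw [← Real.mul_rpow hx0.le (by linarith)]
    congr 1
    field_simp
    ring
  have hxs : x ^ (1 - s) * (1/x) = x ^ (-s) := by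
    rw [one_div, ← Real.rpow_neg_one x, ← Real.rpow_add hx0]
    congr 1
    ring
  have h2 : (x - 1) ^ (1 - s) ≤ x ^ (1 - s) * (1 + (1 - s) * -(1/x)) := by
    rw [hmul]
    exact mul_le_mul_of_nonneg_left hB (rpow_nonneg hx0.le _)
  have h3 : x ^ (1 - s) * (1 + (1 - s) * -(1/x))
      = x ^ (1 - s) - (1 - s) * (x ^ (1 - s) * (1/x)) := by ring
  rw [h3, hxs] at h2
  linarith

private lemma bern2 {s : ℝ} (hs0 : 0 < s) (hs1 : s < 1) {x : ℝ} (hx : 2 ≤ x) :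
    s * x ^ (-1 - s) ≤ (x - 1) ^ (-s) - x ^ (-s) := by
  have hx0 : (0:ℝ) < x := by linarith
  have ht : 1/x ≤ 1/2 := by
    rw [div_le_div_iff₀ hx0 (by norm_num)]; linarith
  have ht0 : 0 < 1/x := by positivity
  have ha0 : (0:ℝ) < 1 + -(1/x) := by linarith
  have hB : (1 + -(1/x)) ^ s ≤ 1 + s * -(1/x) :=
    rpow_one_add_le_one_add_mul_self (by linarith) hs0.le hs1.le
  have ha1 : (1 + -(1/x)) ^ s ≤ 1 := Real.rpow_le_one ha0.le (by linarith) hs0.le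
  have hinv : (1 + -(1/x)) ^ s * (1 + -(1/x)) ^ (-s) = 1 := by
    rw [← Real.rpow_add ha0, add_neg_cancel, Real.rpow_zero]
  have key : s * (1/x) ≤ (1 + -(1/x)) ^ (-s) - 1 := by
    have h1 : s * (1/x) * (1 + -(1/x)) ^ s ≤ 1 - (1 + -(1/x)) ^ s := by
      nlinarith [mul_le_mul_of_nonneg_left ha1 (by positivity : (0:ℝ) ≤ s * (1/x))]
    have h2 : (s * (1/x) * (1 + -(1/x)) ^ s) * (1 + -(1/x)) ^ (-s)
        ≤ (1 - (1 + -(1/x)) ^ s) * (1 + -(1/x)) ^ (-s) :=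
      mul_le_mul_of_nonneg_right h1 (rpow_nonneg ha0.le _)
    have h3 : (s * (1/x) * (1 + -(1/x)) ^ s) * (1 + -(1/x)) ^ (-s)
        = s * (1/x) * ((1 + -(1/x)) ^ s * (1 + -(1/x)) ^ (-s)) := by ring
    have h4 : (1 - (1 + -(1/x)) ^ s) * (1 + -(1/x)) ^ (-s)
        = (1 + -(1/x)) ^ (-s) - (1 + -(1/x)) ^ s * (1 + -(1/x)) ^ (-s) := by ring
    rw [h3, h4, hinv] at h2
    linarith
  have hmul : (x - 1) ^ (-s) = x ^ (-s) * (1 + -(1/x)) ^ (-s) := by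
    rw [← Real.mul_rpow hx0.le ha0.le]
    congr 1
    field_simp
    ring
  have hxs : x ^ (-s) * (1/x) = x ^ (-1 - s) := by
    rw [one_div, ← Real.rpow_neg_one x, ← Real.rpow_add hx0]
    congr 1
    ring
  have h5 : x ^ (-s) * (s * (1/x)) ≤ x ^ (-s) * ((1 + -(1/x)) ^ (-s) - 1) :=
    mul_le_mul_of_nonneg_left key (rpow_nonneg hx0.le _)
  have h6 : x ^ (-s) * (s * (1/x)) = s * (x ^ (-s) * (1/x)) := by ring
  have h7 : x ^ (-s) * ((1 + -(1/x)) ^ (-s) - 1)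
      = x ^ (-s) * (1 + -(1/x)) ^ (-s) - x ^ (-s) := by ring
  rw [h6, hxs, h7, ← hmul] at h5
  exact h5

private lemma partial_sum_rpow {s : ℝ} (hs0 : 0 < s) (hs1 : s < 1) (N : ℕ) :
    ∑ n ∈ range (N + 1), (n : ℝ) ^ (-s) ≤ (N : ℝ) ^ (1 - s) / (1 - s) := by
  have h1s : (0:ℝ) < 1 - s := by linarith
  induction N with
  | zero =>
    simp [Real.zero_rpow (by linarith : -s ≠ 0), Real.zero_rpow (by linarith : 1 - s ≠ 0)]
  | succ N ih =>
    rw [Finset.sum_range_succ]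
    push_cast
    have hkey : (1 - s) * ((N:ℝ) + 1) ^ (-s) ≤ ((N:ℝ) + 1) ^ (1 - s) - (N : ℝ) ^ (1 - s) := by
      have h := bern1 hs0 hs1 (x := (N:ℝ) + 1) (by
        have : (0:ℝ) ≤ (N:ℝ) := Nat.cast_nonneg N
        linarith)
      simpa using h
    have h3 : (1 - s)⁻¹ * ((1 - s) * ((N:ℝ) + 1) ^ (-s))
        ≤ (1 - s)⁻¹ * (((N:ℝ) + 1) ^ (1 - s) - (N : ℝ) ^ (1 - s)) :=
      mul_le_mul_of_nonneg_left hkey (by positivity)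
    rw [inv_mul_cancel_left₀ h1s.ne'] at h3
    have hms := mul_sub ((1 - s)⁻¹) (((N:ℝ) + 1) ^ (1 - s)) ((N : ℝ) ^ (1 - s))
    simp only [div_eq_inv_mul] at ih ⊢
    linarith

private lemma tail_partial {s : ℝ} (hs0 : 0 < s) (hs1 : s < 1) (N : ℕ) (hN : 1 ≤ N) (m : ℕ) :
    ∑ n ∈ range m, ((n + (N + 1) : ℕ) : ℝ) ^ (-1 - s)
      ≤ ((N : ℝ) ^ (-s) - ((N + m : ℕ) : ℝ) ^ (-s)) / s := by
  induction m with
  | zero => simp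
  | succ m ih =>
    rw [Finset.sum_range_succ]
    have hx : (2:ℝ) ≤ ((m + (N + 1) : ℕ) : ℝ) := by
      push_cast
      have h1 : (1:ℝ) ≤ (N:ℝ) := by exact_mod_cast hN
      have h2 : (0:ℝ) ≤ (m:ℝ) := Nat.cast_nonneg m
      linarith
    have hkey := bern2 hs0 hs1 hx
    have hc1 : ((m + (N + 1) : ℕ) : ℝ) - 1 = ((N + m : ℕ) : ℝ) := by push_cast; ring
    have hc2 : ((N + (m+1) : ℕ) : ℝ) = ((m + (N + 1) : ℕ) : ℝ) := by push_cast; ring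
    rw [hc1] at hkey
    rw [hc2]
    have h3 : s⁻¹ * (s * ((m + (N + 1) : ℕ) : ℝ) ^ (-1 - s))
        ≤ s⁻¹ * (((N + m : ℕ) : ℝ) ^ (-s) - ((m + (N + 1) : ℕ) : ℝ) ^ (-s)) :=
      mul_le_mul_of_nonneg_left hkey (by positivity)
    rw [inv_mul_cancel_left₀ hs0.ne'] at h3
    have hms := mul_sub (s⁻¹) (((N + m : ℕ) : ℝ) ^ (-s)) (((m + (N + 1) : ℕ) : ℝ) ^ (-s))
    have hms2 := mul_sub (s⁻¹) ((N : ℝ) ^ (-s)) (((N + m : ℕ) : ℝ) ^ (-s))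
    have hms3 := mul_sub (s⁻¹) ((N : ℝ) ^ (-s)) (((m + (N + 1) : ℕ) : ℝ) ^ (-s))
    simp only [div_eq_inv_mul] at ih ⊢
    linarith

private noncomputable def auxh (s ε : ℝ) (N : ℕ) (n : ℕ) : ℝ :=
  if n ≤ N then ε * (n : ℝ) ^ (-s) else (n : ℝ) ^ (-1 - s)

private lemma inner_le {s : ℝ} (hs0 : 0 < s) (hs1 : s < 1) {ε : ℝ} (hε0 : 0 < ε)
    (hεh : ε ≤ 1 / 2) :
    (∑' k : ℕ+, min (1 / ((k : ℕ) : ℝ)) ε * ((k : ℕ) : ℝ) ^ (-s))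
      ≤ (1 / (1 - s) + 2 / s) * ε ^ s := by
  have h1s : (0:ℝ) < 1 - s := by linarith
  have hinv2 : (2:ℝ) ≤ ε⁻¹ := by
    have h := inv_anti₀ hε0 hεh
    simpa using h
  set N := ⌊ε⁻¹⌋₊ with hNdef
  have hN2 : 2 ≤ N := Nat.le_floor (by exact_mod_cast hinv2)
  have hNle : (N : ℝ) ≤ ε⁻¹ := Nat.floor_le (by positivity)
  have hNge : ε⁻¹ / 2 ≤ (N : ℝ) := by
    have h := Nat.sub_one_lt_floor ε⁻¹
    rw [← hNdef] at h
    linarith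
  clear_value N
  clear hNdef
  have hNpos : (0:ℝ) < (N:ℝ) := by linarith
  have hh0 : ∀ n, 0 ≤ auxh s ε N n := by
    intro n
    unfold auxh
    split <;> positivity
  have hsum_shift : Summable (fun n : ℕ => ((n + (N + 1) : ℕ) : ℝ) ^ (-1 - s)) := by
    have hbase : Summable (fun n : ℕ => (n : ℝ) ^ (-1 - s)) :=
      Real.summable_nat_rpow.mpr (by linarith)
    exact (summable_nat_add_iff (f := fun n : ℕ => (n : ℝ) ^ (-1 - s)) (N + 1)).mpr hbase
  have hhsum : Summable (auxh s ε N) := by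
    rw [← summable_nat_add_iff (f := auxh s ε N) (N + 1)]
    apply hsum_shift.congr
    intro n
    unfold auxh
    rw [if_neg (by omega)]
  have hfle : ∀ k : ℕ+, min (1 / ((k : ℕ) : ℝ)) ε * ((k : ℕ) : ℝ) ^ (-s) ≤ auxh s ε N (k : ℕ) := by
    intro k
    have hk0 : (0:ℝ) < ((k : ℕ) : ℝ) := by exact_mod_cast k.pos
    by_cases hk : (k : ℕ) ≤ N
    · unfold auxh
      rw [if_pos hk]
      exact mul_le_mul_of_nonneg_right (min_le_right _ _) (rpow_nonneg hk0.le _)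
    · unfold auxh
      rw [if_neg hk]
      calc min (1 / ((k : ℕ) : ℝ)) ε * ((k : ℕ) : ℝ) ^ (-s)
          ≤ 1 / ((k : ℕ) : ℝ) * ((k : ℕ) : ℝ) ^ (-s) :=
            mul_le_mul_of_nonneg_right (min_le_left _ _) (rpow_nonneg hk0.le _)
        _ = ((k : ℕ) : ℝ) ^ (-1 - s) := by
            rw [one_div, ← Real.rpow_neg_one ((k : ℕ) : ℝ), ← Real.rpow_add hk0]
            ring_nf
  have hfsum : Summable (fun k : ℕ+ => min (1 / ((k : ℕ) : ℝ)) ε * ((k : ℕ) : ℝ) ^ (-s)) := by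
    have hg : Summable (fun k : ℕ+ => ((k : ℕ) : ℝ) ^ (-1 - s)) :=
      (Real.summable_nat_rpow.mpr (by linarith : (-1 - s) < -1)).comp_injective PNat.coe_injective
    apply Summable.of_nonneg_of_le (fun k => ?_) (fun k => ?_) hg
    · have hk0 : (0:ℝ) < ((k : ℕ) : ℝ) := by exact_mod_cast k.pos
      have hm : 0 ≤ min (1 / ((k : ℕ) : ℝ)) ε := le_min (by positivity) hε0.le
      positivity
    · have hk0 : (0:ℝ) < ((k : ℕ) : ℝ) := by exact_mod_cast k.pos
      calc min (1 / ((k : ℕ) : ℝ)) ε * ((k : ℕ) : ℝ) ^ (-s)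
          ≤ 1 / ((k : ℕ) : ℝ) * ((k : ℕ) : ℝ) ^ (-s) :=
            mul_le_mul_of_nonneg_right (min_le_left _ _) (rpow_nonneg hk0.le _)
        _ = ((k : ℕ) : ℝ) ^ (-1 - s) := by
            rw [one_div, ← Real.rpow_neg_one ((k : ℕ) : ℝ), ← Real.rpow_add hk0]
            ring_nf
  -- head bound
  have hhead : ∑ n ∈ range (N + 1), auxh s ε N n ≤ ε ^ s / (1 - s) := by
    have heq : ∑ n ∈ range (N + 1), auxh s ε N n = ε * ∑ n ∈ range (N + 1), (n : ℝ) ^ (-s) := by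
      rw [Finset.mul_sum]
      apply Finset.sum_congr rfl
      intro n hn
      unfold auxh
      rw [if_pos (Nat.lt_succ_iff.mp (Finset.mem_range.mp hn))]
    rw [heq]
    have h1 : ε * ∑ n ∈ range (N + 1), (n : ℝ) ^ (-s) ≤ ε * ((N : ℝ) ^ (1 - s) / (1 - s)) :=
      mul_le_mul_of_nonneg_left (partial_sum_rpow hs0 hs1 N) hε0.le
    have h2 : ε * (N : ℝ) ^ (1 - s) ≤ ε ^ s := by
      have hr1 : (N : ℝ) ^ (1 - s) ≤ (ε⁻¹) ^ (1 - s) :=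
        Real.rpow_le_rpow (Nat.cast_nonneg N) hNle h1s.le
      have hr2 : (ε⁻¹) ^ (1 - s) = ε ^ (s - 1) := by
        rw [← Real.rpow_neg_one ε, ← Real.rpow_mul hε0.le]
        congr 1
        ring
      have hr3 : ε * ε ^ (s - 1) = ε ^ s := by
        nth_rewrite 1 [← Real.rpow_one ε]
        rw [← Real.rpow_add hε0]
        congr 1
        ring
      calc ε * (N : ℝ) ^ (1 - s) ≤ ε * ε ^ (s - 1) := by
            rw [← hr2]
            exact mul_le_mul_of_nonneg_left hr1 hε0.le
        _ = ε ^ s := hr3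
    apply h1.trans
    calc ε * ((N : ℝ) ^ (1 - s) / (1 - s)) = ε * (N : ℝ) ^ (1 - s) / (1 - s) := by ring
      _ ≤ ε ^ s / (1 - s) := by gcongr
  -- tail bound
  have htail : (∑' n : ℕ, auxh s ε N (n + (N + 1))) ≤ 2 * ε ^ s / s := by
    have heq : ∀ n : ℕ, auxh s ε N (n + (N + 1)) = ((n + (N + 1) : ℕ) : ℝ) ^ (-1 - s) := by
      intro n
      unfold auxh
      rw [if_neg (by omega)]
    rw [tsum_congr heq]
    have hNs : (N : ℝ) ^ (-s) ≤ 2 * ε ^ s := by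
      have hq0 : (0:ℝ) < ε⁻¹ / 2 := by positivity
      have hr1 : (N : ℝ) ^ (-s) ≤ (ε⁻¹ / 2) ^ (-s) :=
        Real.rpow_le_rpow_of_nonpos hq0 hNge (by linarith)
      have hr2 : (ε⁻¹ / 2 : ℝ) = (2 * ε)⁻¹ := by
        field_simp
      have hr3 : ((2 * ε)⁻¹ : ℝ) ^ (-s) = (2 * ε) ^ s := by
        rw [Real.inv_rpow (by positivity), Real.rpow_neg (by positivity), inv_inv]
      have hr4 : ((2 * ε) : ℝ) ^ s = 2 ^ s * ε ^ s := Real.mul_rpow (by norm_num) hε0.le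
      have hr5 : (2:ℝ) ^ s ≤ 2 := by
        nth_rewrite 2 [← Real.rpow_one 2]
        exact Real.rpow_le_rpow_of_exponent_le one_le_two hs1.le
      calc (N : ℝ) ^ (-s) ≤ ((2 * ε)⁻¹ : ℝ) ^ (-s) := by rw [← hr2]; exact hr1
        _ = 2 ^ s * ε ^ s := by rw [hr3, hr4]
        _ ≤ 2 * ε ^ s := mul_le_mul_of_nonneg_right hr5 (rpow_nonneg hε0.le _)
    have hb : (∑' n : ℕ, ((n + (N + 1) : ℕ) : ℝ) ^ (-1 - s)) ≤ (N : ℝ) ^ (-s) / s := by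
      apply hsum_shift.tsum_le_of_sum_range_le
      intro m
      calc ∑ n ∈ range m, ((n + (N + 1) : ℕ) : ℝ) ^ (-1 - s)
          ≤ ((N : ℝ) ^ (-s) - ((N + m : ℕ) : ℝ) ^ (-s)) / s :=
            tail_partial hs0 hs1 N (by omega) m
        _ ≤ (N : ℝ) ^ (-s) / s := by
            gcongr
            have h0 : (0:ℝ) ≤ ((N + m : ℕ) : ℝ) ^ (-s) := rpow_nonneg (Nat.cast_nonneg _) _
            linarith
    calc (∑' n : ℕ, ((n + (N + 1) : ℕ) : ℝ) ^ (-1 - s)) ≤ (N : ℝ) ^ (-s) / s := hb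
      _ ≤ 2 * ε ^ s / s := by gcongr
  -- combine
  calc (∑' k : ℕ+, min (1 / ((k : ℕ) : ℝ)) ε * ((k : ℕ) : ℝ) ^ (-s))
      ≤ ∑' n : ℕ, auxh s ε N n :=
        hfsum.tsum_le_tsum_of_inj (fun k : ℕ+ => (k : ℕ)) PNat.coe_injective
          (fun c _ => hh0 c) hfle hhsum
    _ = ∑ n ∈ range (N + 1), auxh s ε N n + ∑' n : ℕ, auxh s ε N (n + (N + 1)) :=
        (hhsum.sum_add_tsum_nat_add (N + 1)).symm
    _ ≤ ε ^ s / (1 - s) + 2 * ε ^ s / s := add_le_add hhead htail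
    _ = (1 / (1 - s) + 2 / s) * ε ^ s := by ring

/-- Case 3 estimate: for `0 < s < 1` there is `C = C(s)` with
`∑_{j∈I} ∑_{k≥1} min{1/k, q2^{-j}} · (ψ2^j/q) · (qk)^{-s} ≤ C q^{-s} ψ^s`,
where `I = {j ∈ ℕ : 2q ≤ 2^j ≤ q/ψ}`. -/
theorem case3_sum_le (s : ℝ) (hs0 : 0 < s) (hs1 : s < 1) :
    ∃ C : ℝ, 0 < C ∧
      ∀ q : ℕ, 1 ≤ q → ∀ ψ : ℝ, 0 < ψ → ψ < 1 / 4 →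
        (∑' j : {j : ℕ // 2 * (q : ℝ) ≤ (2 : ℝ) ^ (j : ℝ) ∧ (2 : ℝ) ^ (j : ℝ) ≤ q / ψ},
          ∑' k : ℕ+,
            min (1 / ((k : ℕ) : ℝ)) ((q : ℝ) * (2 : ℝ) ^ (-((j : ℕ) : ℝ))) *
              (ψ * (2 : ℝ) ^ (((j : ℕ)) : ℝ) / q) *
                ((q : ℝ) * ((k : ℕ) : ℝ)) ^ (-s)) ≤
          C * (q : ℝ) ^ (-s) * ψ ^ s := by
  have h1s : (0:ℝ) < 1 - s := by linarith
  set A : ℝ := 1 / (1 - s) + 2 / s with hA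
  have hA0 : 0 < A := by positivity
  clear_value A
  set x : ℝ := (2:ℝ) ^ (1 - s) with hxdef
  have hx1 : 1 < x := by
    rw [hxdef, show (1:ℝ) = (2:ℝ) ^ (0:ℝ) from (Real.rpow_zero 2).symm]
    exact Real.rpow_lt_rpow_of_exponent_lt one_lt_two (by linarith)
  have hx0 : 0 < x := by linarith
  have hden : (0:ℝ) < x - 1 := by linarith
  refine ⟨2 * A / (x - 1), div_pos (by positivity) hden, ?_⟩
  intro q hq ψ hψ0 hψ4
  have hq0 : (0:ℝ) < (q:ℝ) := by exact_mod_cast hq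
  have hq1 : (1:ℝ) ≤ (q:ℝ) := by exact_mod_cast hq
  have hT0 : (0:ℝ) < (q:ℝ) / ψ := by positivity
  have hT1 : (1:ℝ) ≤ (q:ℝ) / ψ := by
    rw [le_div_iff₀ hψ0]
    nlinarith
  set J₀ : ℕ := ⌊Real.logb 2 ((q:ℝ) / ψ)⌋₊ with hJdef
  have h2J : (2:ℝ) ^ (J₀ : ℝ) ≤ (q:ℝ) / ψ := by
    have h1 : (J₀ : ℝ) ≤ Real.logb 2 ((q:ℝ) / ψ) :=
      Nat.floor_le (Real.logb_nonneg one_lt_two hT1)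
    calc (2:ℝ) ^ (J₀ : ℝ) ≤ (2:ℝ) ^ (Real.logb 2 ((q:ℝ) / ψ)) :=
          Real.rpow_le_rpow_of_exponent_le one_le_two h1
      _ = (q:ℝ) / ψ := Real.rpow_logb (by norm_num) (by norm_num) hT0
  have hmemle : ∀ j : ℕ, (2 : ℝ) ^ (j : ℝ) ≤ (q:ℝ) / ψ → j ≤ J₀ := by
    intro j hj
    apply Nat.le_floor
    have h1 : (2:ℝ) ^ (j:ℝ) ≤ (2:ℝ) ^ (Real.logb 2 ((q:ℝ) / ψ)) := by
      rwa [Real.rpow_logb (by norm_num) (by norm_num) hT0]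
    exact (Real.rpow_le_rpow_left_iff one_lt_two).mp h1
  clear_value J₀
  clear hJdef
  haveI hfin : Finite {j : ℕ // 2 * (q : ℝ) ≤ (2 : ℝ) ^ (j : ℝ) ∧ (2 : ℝ) ^ (j : ℝ) ≤ (q:ℝ) / ψ} := by
    apply Finite.of_injective
      (fun a : {j : ℕ // 2 * (q : ℝ) ≤ (2 : ℝ) ^ (j : ℝ) ∧ (2 : ℝ) ^ (j : ℝ) ≤ (q:ℝ) / ψ} =>
        (⟨a.1, Nat.lt_succ_of_le (hmemle a.1 a.2.2)⟩ : Fin (J₀ + 1)))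
    intro a b hab
    apply Subtype.ext
    exact congrArg Fin.val hab
  haveI := Fintype.ofFinite
    {j : ℕ // 2 * (q : ℝ) ≤ (2 : ℝ) ^ (j : ℝ) ∧ (2 : ℝ) ^ (j : ℝ) ≤ (q:ℝ) / ψ}
  rw [tsum_fintype]
  have key : ∀ j : ℕ, 2 * (q : ℝ) ≤ (2 : ℝ) ^ (j : ℝ) → (2 : ℝ) ^ (j : ℝ) ≤ (q:ℝ) / ψ →
      (∑' k : ℕ+,
        min (1 / ((k : ℕ) : ℝ)) ((q : ℝ) * (2 : ℝ) ^ (-(j : ℝ))) *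
          (ψ * (2 : ℝ) ^ (j : ℝ) / q) *
            ((q : ℝ) * ((k : ℕ) : ℝ)) ^ (-s)) ≤ A * (ψ / q) * x ^ j := by
    intro j hj1 hj2
    have h2j : (0:ℝ) < (2:ℝ) ^ (j : ℝ) := Real.rpow_pos_of_pos (by norm_num) _
    have h2jn : (0:ℝ) < (2:ℝ) ^ (-(j : ℝ)) := Real.rpow_pos_of_pos (by norm_num) _
    have hε0 : 0 < (q : ℝ) * (2 : ℝ) ^ (-(j : ℝ)) := by positivity
    have hεinv : (2:ℝ) ^ (-(j : ℝ)) = ((2:ℝ) ^ (j : ℝ))⁻¹ := by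
      rw [← Real.rpow_neg (by norm_num)]
    have hεh : (q : ℝ) * (2 : ℝ) ^ (-(j : ℝ)) ≤ 1 / 2 := by
      rw [hεinv, inv_eq_one_div, mul_one_div, div_le_div_iff₀ h2j (by norm_num)]
      linarith
    have step1 : (∑' k : ℕ+,
        min (1 / ((k : ℕ) : ℝ)) ((q : ℝ) * (2 : ℝ) ^ (-(j : ℝ))) *
          (ψ * (2 : ℝ) ^ (j : ℝ) / q) * ((q : ℝ) * ((k : ℕ) : ℝ)) ^ (-s))
        = (∑' k : ℕ+, min (1 / ((k : ℕ) : ℝ)) ((q : ℝ) * (2 : ℝ) ^ (-(j : ℝ))) *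
              ((k : ℕ) : ℝ) ^ (-s)) *
            ((ψ * (2 : ℝ) ^ (j : ℝ) / q) * (q : ℝ) ^ (-s)) := by
      rw [← tsum_mul_right]
      apply tsum_congr
      intro k
      rw [Real.mul_rpow hq0.le (Nat.cast_nonneg _)]
      ring
    rw [step1]
    have step2 : (∑' k : ℕ+, min (1 / ((k : ℕ) : ℝ)) ((q : ℝ) * (2 : ℝ) ^ (-(j : ℝ))) *
              ((k : ℕ) : ℝ) ^ (-s)) *
            ((ψ * (2 : ℝ) ^ (j : ℝ) / q) * (q : ℝ) ^ (-s))
        ≤ (A * ((q : ℝ) * (2 : ℝ) ^ (-(j : ℝ))) ^ s) *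
            ((ψ * (2 : ℝ) ^ (j : ℝ) / q) * (q : ℝ) ^ (-s)) := by
      apply mul_le_mul_of_nonneg_right _ (by positivity)
      rw [hA]
      exact inner_le hs0 hs1 hε0 hεh
    apply step2.trans
    apply le_of_eq
    have e1 : ((q : ℝ) * (2 : ℝ) ^ (-(j : ℝ))) ^ s * (q : ℝ) ^ (-s)
        = (2:ℝ) ^ (-(j : ℝ) * s) := by
      rw [Real.mul_rpow hq0.le h2jn.le, ← Real.rpow_mul (by norm_num : (0:ℝ) ≤ 2)]
      have hqq : (q:ℝ) ^ s * (q:ℝ) ^ (-s) = 1 := by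
        rw [← Real.rpow_add hq0, add_neg_cancel, Real.rpow_zero]
      calc (q:ℝ) ^ s * (2:ℝ) ^ (-(j : ℝ) * s) * (q : ℝ) ^ (-s)
          = ((q:ℝ) ^ s * (q:ℝ) ^ (-s)) * (2:ℝ) ^ (-(j : ℝ) * s) := by ring
        _ = (2:ℝ) ^ (-(j : ℝ) * s) := by rw [hqq]; ring
    have e2 : (2:ℝ) ^ (-(j : ℝ) * s) * (2:ℝ) ^ (j : ℝ) = x ^ j := by
      rw [← Real.rpow_add (by norm_num : (0:ℝ) < 2), hxdef,
        ← Real.rpow_natCast ((2:ℝ) ^ (1 - s)) j, ← Real.rpow_mul (by norm_num : (0:ℝ) ≤ 2)]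
      congr 1
      ring
    calc (A * ((q : ℝ) * (2 : ℝ) ^ (-(j : ℝ))) ^ s) *
            ((ψ * (2 : ℝ) ^ (j : ℝ) / q) * (q : ℝ) ^ (-s))
        = A * (ψ / q) *
            (((q : ℝ) * (2 : ℝ) ^ (-(j : ℝ))) ^ s * (q : ℝ) ^ (-s) * (2:ℝ) ^ (j : ℝ)) := by
          ring
      _ = A * (ψ / q) * x ^ j := by rw [e1, e2]
  have hdivle : ∀ a b : ℝ, a ≤ b → a / (x - 1) ≤ b / (x - 1) := by
    intro a b hab
    rw [div_le_div_iff₀ hden hden]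
    nlinarith [mul_le_mul_of_nonneg_right hab hden.le]
  refine le_trans (Finset.sum_le_sum (fun b _ => key b.1 b.2.1 b.2.2)) ?_
  rw [← Finset.mul_sum]
  have hsub : (∑ b : {j : ℕ // 2 * (q : ℝ) ≤ (2 : ℝ) ^ (j : ℝ) ∧ (2 : ℝ) ^ (j : ℝ) ≤ (q:ℝ) / ψ},
      x ^ (b.1 : ℕ)) ≤ ∑ i ∈ range (J₀ + 1), x ^ i := by
    have himg : ∑ i ∈ (Finset.univ :
          Finset {j : ℕ // 2 * (q : ℝ) ≤ (2 : ℝ) ^ (j : ℝ) ∧ (2 : ℝ) ^ (j : ℝ) ≤ (q:ℝ) / ψ}).image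
          Subtype.val, x ^ i
        = ∑ b : {j : ℕ // 2 * (q : ℝ) ≤ (2 : ℝ) ^ (j : ℝ) ∧ (2 : ℝ) ^ (j : ℝ) ≤ (q:ℝ) / ψ},
            x ^ (b.1 : ℕ) :=
      Finset.sum_image (fun a _ b _ hab => Subtype.ext hab)
    rw [← himg]
    apply Finset.sum_le_sum_of_subset_of_nonneg
    · intro i hi
      rw [Finset.mem_image] at hi
      obtain ⟨b, _, rfl⟩ := hi
      exact Finset.mem_range.mpr (Nat.lt_succ_of_le (hmemle b.1 b.2.2))
    · intro i _ _
      positivity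
  have hgeom : ∑ i ∈ range (J₀ + 1), x ^ i ≤ x ^ (J₀ + 1) / (x - 1) := by
    rw [geom_sum_eq hx1.ne' (J₀ + 1)]
    apply hdivle
    have hp : (0:ℝ) < x ^ (J₀ + 1) := by positivity
    linarith
  have hxJ : x ^ (J₀ + 1) ≤ 2 * ((q:ℝ) ^ (1 - s) * ψ ^ (s - 1)) := by
    have hxle2 : x ≤ 2 := by
      rw [hxdef]
      nth_rewrite 2 [← Real.rpow_one 2]
      exact Real.rpow_le_rpow_of_exponent_le one_le_two (by linarith)
    have hxJ0 : x ^ J₀ ≤ ((q:ℝ) / ψ) ^ (1 - s) := by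
      have hx_eq : x ^ J₀ = ((2:ℝ) ^ (J₀ : ℝ)) ^ (1 - s) := by
        rw [hxdef, ← Real.rpow_natCast ((2:ℝ) ^ (1 - s)) J₀,
          ← Real.rpow_mul (by norm_num : (0:ℝ) ≤ 2),
          ← Real.rpow_mul (by norm_num : (0:ℝ) ≤ 2)]
        congr 1
        ring
      rw [hx_eq]
      exact Real.rpow_le_rpow (by positivity) h2J h1s.le
    have hTeq : ((q:ℝ) / ψ) ^ (1 - s) = (q:ℝ) ^ (1 - s) * ψ ^ (s - 1) := by
      rw [Real.div_rpow hq0.le hψ0.le, div_eq_mul_inv, ← Real.rpow_neg hψ0.le]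
      congr 1
      ring
    calc x ^ (J₀ + 1) = x * x ^ J₀ := by ring
      _ ≤ 2 * (((q:ℝ) / ψ) ^ (1 - s)) :=
          mul_le_mul hxle2 hxJ0 (by positivity) (by norm_num)
      _ = 2 * ((q:ℝ) ^ (1 - s) * ψ ^ (s - 1)) := by rw [hTeq]
  have eq_q : (q:ℝ) ^ (1 - s) * (q:ℝ)⁻¹ = (q:ℝ) ^ (-s) := by
    rw [← Real.rpow_neg_one (q:ℝ), ← Real.rpow_add hq0]
    congr 1
    ring
  have eq_ψ : ψ * ψ ^ (s - 1) = ψ ^ s := by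
    nth_rewrite 1 [← Real.rpow_one ψ]
    rw [← Real.rpow_add hψ0]
    congr 1
    ring
  calc A * (ψ / q) *
        (∑ b : {j : ℕ // 2 * (q : ℝ) ≤ (2 : ℝ) ^ (j : ℝ) ∧ (2 : ℝ) ^ (j : ℝ) ≤ (q:ℝ) / ψ},
          x ^ (b.1 : ℕ))
      ≤ A * (ψ / q) * (x ^ (J₀ + 1) / (x - 1)) := by
        apply mul_le_mul_of_nonneg_left (hsub.trans hgeom)
          (mul_nonneg hA0.le (by positivity))
    _ ≤ A * (ψ / q) * ((2 * ((q:ℝ) ^ (1 - s) * ψ ^ (s - 1))) / (x - 1)) := by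
        apply mul_le_mul_of_nonneg_left (hdivle _ _ hxJ)
          (mul_nonneg hA0.le (by positivity))
    _ = (2 * A / (x - 1)) * ((q:ℝ) ^ (1 - s) * (q:ℝ)⁻¹) * (ψ * ψ ^ (s - 1)) := by
        ring
    _ = 2 * A / (x - 1) * (q : ℝ) ^ (-s) * ψ ^ s := by rw [eq_q, eq_ψ]
end
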